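/- arXiv:1011.2911 — 3 statements merged into one kernel-verified Lean document; each statement's English description precedes it below -/
import Mathlib

section
/- Let M⁺ and M⁻ be compact Polish spaces, c ∈ C(M⁺ × M⁻), and μ⁺, μ⁻ Borel probability measures on M⁺, M⁻. Then the Kantorovich minimum equals the dual supremum: min over γ ∈ Γ(μ⁺,μ⁻) of ∫ c dγ = sup over pairs (−u,−v) ∈ Lip_c of −∫ u dμ⁺ − ∫ v dμ⁻. -/
open MeasureTheory Set
open scoped ENNReal NNReal

set_option linter.unusedSectionVars false
set_option maxHeartbeats 1000000

noncomputable section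

/-- `γ` is a transport plan (coupling) between `μ` and `ν`. -/
def IsCoupling {X Y : Type*} [MeasurableSpace X] [MeasurableSpace Y]
    (γ : Measure (X × Y)) (μ : Measure X) (ν : Measure Y) : Prop :=
  γ.map Prod.fst = μ ∧ γ.map Prod.snd = ν

namespace KantorovichAux

section Riesz


variable {Z : Type*} [MetricSpace Z] [CompactSpace Z]

/-- Test functions for the Riesz content of a set `K`. -/
def FF (K : Set Z) : Set C(Z, ℝ) := {f | (∀ z, 0 ≤ f z) ∧ ∀ z ∈ K, 1 ≤ f z}

lemma one_mem_FF (K : Set Z) : (1 : C(Z, ℝ)) ∈ FF K :=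
  ⟨fun _ => zero_le_one, fun _ _ => le_refl 1⟩

variable (L : C(Z, ℝ) →ₗ[ℝ] ℝ)

/-- The Riesz content of a set. -/
def cfn (K : Set Z) : ℝ := sInf (L '' FF K)

lemma FF_nonempty (K : Set Z) : (L '' FF K).Nonempty := ⟨L 1, 1, one_mem_FF K, rfl⟩

variable (hL : ∀ f : C(Z, ℝ), (∀ z, 0 ≤ f z) → 0 ≤ L f)
include hL

lemma L_mono {f g : C(Z, ℝ)} (h : ∀ z, f z ≤ g z) : L f ≤ L g := by
  have h0 : 0 ≤ L (g - f) := hL _ (fun z => by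
    simpa [ContinuousMap.sub_apply] using sub_nonneg.2 (h z))
  rw [map_sub] at h0
  linarith

lemma FF_bddBelow (K : Set Z) : ∀ y ∈ L '' FF K, (0:ℝ) ≤ y := by
  rintro y ⟨f, hf, rfl⟩
  exact hL f hf.1

lemma cfn_nonneg (K : Set Z) : 0 ≤ cfn L K :=
  le_csInf (FF_nonempty L K) (FF_bddBelow L hL K)

lemma cfn_le {K : Set Z} {f : C(Z, ℝ)} (hf : f ∈ FF K) : cfn L K ≤ L f :=
  csInf_le ⟨0, fun y hy => FF_bddBelow L hL K y hy⟩ ⟨f, hf, rfl⟩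

lemma le_cfn {K : Set Z} {r : ℝ} (h : ∀ f ∈ FF K, r ≤ L f) : r ≤ cfn L K :=
  le_csInf (FF_nonempty L K) (by rintro y ⟨f, hf, rfl⟩; exact h f hf)

lemma cfn_mono {K₁ K₂ : Set Z} (h : K₁ ⊆ K₂) : cfn L K₁ ≤ cfn L K₂ :=
  le_cfn L hL (fun f hf => cfn_le L hL ⟨hf.1, fun z hz => hf.2 z (h hz)⟩)

lemma cfn_union_le (K₁ K₂ : Set Z) :
    cfn L (K₁ ∪ K₂) ≤ cfn L K₁ + cfn L K₂ := by
  apply le_of_forall_pos_le_add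
  intro ε hε
  obtain ⟨y₁, ⟨f₁, hf₁, rfl⟩, h₁⟩ := exists_lt_of_csInf_lt (FF_nonempty L K₁)
    (show cfn L K₁ < cfn L K₁ + ε / 2 by linarith)
  obtain ⟨y₂, ⟨f₂, hf₂, rfl⟩, h₂⟩ := exists_lt_of_csInf_lt (FF_nonempty L K₂)
    (show cfn L K₂ < cfn L K₂ + ε / 2 by linarith)
  have hmem : f₁ + f₂ ∈ FF (K₁ ∪ K₂) := by
    constructor
    · intro z
      simpa [ContinuousMap.add_apply] using add_nonneg (hf₁.1 z) (hf₂.1 z)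
    · rintro z (hz | hz)
      · simpa [ContinuousMap.add_apply] using
          le_add_of_le_of_nonneg (hf₁.2 z hz) (hf₂.1 z)
      · simpa [ContinuousMap.add_apply] using
          le_add_of_nonneg_of_le (hf₁.1 z) (hf₂.2 z hz)
  calc cfn L (K₁ ∪ K₂) ≤ L (f₁ + f₂) := cfn_le L hL hmem
    _ = L f₁ + L f₂ := map_add _ _ _
    _ ≤ cfn L K₁ + cfn L K₂ + ε := by linarith

lemma cfn_union_disjoint {K₁ K₂ : Set Z} (hd : Disjoint K₁ K₂)
    (h₁ : IsClosed K₁) (h₂ : IsClosed K₂) :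
    cfn L (K₁ ∪ K₂) = cfn L K₁ + cfn L K₂ := by
  refine le_antisymm (cfn_union_le L hL K₁ K₂) ?_
  obtain ⟨g, hg1, hg2, hg01⟩ := exists_continuous_zero_one_of_isClosed h₁ h₂ hd
  apply le_cfn L hL
  intro f hf
  have e1 : f * (1 - g) ∈ FF K₁ := by
    constructor
    · intro z
      have := (hg01 z).2
      have := (hg01 z).1
      have := hf.1 z
      simp only [ContinuousMap.mul_apply, ContinuousMap.sub_apply, ContinuousMap.one_apply]
      nlinarith
    · intro z hz
      have hgz : g z = 0 := by simpa using hg1 hz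
      have hfz := hf.2 z (Or.inl hz)
      simp only [ContinuousMap.mul_apply, ContinuousMap.sub_apply, ContinuousMap.one_apply, hgz]
      linarith
  have e2 : f * g ∈ FF K₂ := by
    constructor
    · intro z
      have := (hg01 z).1
      have := hf.1 z
      simp only [ContinuousMap.mul_apply]
      nlinarith
    · intro z hz
      have hgz : g z = 1 := by simpa using hg2 hz
      have hfz := hf.2 z (Or.inr hz)
      simp only [ContinuousMap.mul_apply, hgz]
      linarith
  have : L (f * (1 - g)) + L (f * g) = L f := by
    rw [← map_add]
    congr 1
    ring
  calc cfn L K₁ + cfn L K₂ ≤ L (f * (1 - g)) + L (f * g) :=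
        add_le_add (cfn_le L hL e1) (cfn_le L hL e2)
    _ = L f := this

/-- The Riesz content as a `Content`. -/
def rContent : Content Z where
  toFun K := (cfn L K.1).toNNReal
  mono' K₁ K₂ h := Real.toNNReal_mono (cfn_mono L hL h)
  sup_disjoint' K₁ K₂ hd hc₁ hc₂ := by
    show (cfn L ((K₁ ⊔ K₂ : TopologicalSpace.Compacts Z) : Set Z)).toNNReal
        = (cfn L (K₁ : Set Z)).toNNReal + (cfn L (K₂ : Set Z)).toNNReal
    rw [TopologicalSpace.Compacts.coe_sup, cfn_union_disjoint L hL hd hc₁ hc₂,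
      Real.toNNReal_add (cfn_nonneg L hL _) (cfn_nonneg L hL _)]
  sup_le' K₁ K₂ := by
    show (cfn L ((K₁ ⊔ K₂ : TopologicalSpace.Compacts Z) : Set Z)).toNNReal
        ≤ (cfn L (K₁ : Set Z)).toNNReal + (cfn L (K₂ : Set Z)).toNNReal
    rw [TopologicalSpace.Compacts.coe_sup,
      ← Real.toNNReal_add (cfn_nonneg L hL _) (cfn_nonneg L hL _)]
    exact Real.toNNReal_mono (cfn_union_le L hL (K₁ : Set Z) (K₂ : Set Z))

lemma rContent_regular : MeasureTheory.Content.ContentRegular (rContent L hL) := by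
  intro K
  refine le_antisymm (le_iInf fun K' => le_iInf fun hK' => ?_) ?_
  · exact (rContent L hL).mono _ _ (hK'.trans interior_subset)
  · apply ENNReal.le_of_forall_pos_le_add
    intro ε hε _
    -- find a good test function
    have hpos : (0:ℝ) < ε / 2 := by positivity
    obtain ⟨y, ⟨f, hf, rfl⟩, hfe⟩ := exists_lt_of_csInf_lt (FF_nonempty L K.1)
      (show cfn L K.1 < cfn L K.1 + ε / 2 by linarith)
    have hLf0 : 0 ≤ L f := hL f hf.1
    set η : ℝ := (ε / 2) / (L f + 1) with hη
    have hηpos : 0 < η := by positivity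
    set K' : Set Z := {z | 1 / (1 + η) ≤ f z} with hK'def
    have hK'closed : IsClosed K' := isClosed_le continuous_const f.continuous
    have hopen : IsOpen {z : Z | 1 / (1 + η) < f z} :=
      isOpen_lt continuous_const f.continuous
    have hKsub : K.1 ⊆ interior K' := by
      refine subset_trans ?_ (interior_maximal ?_ hopen)
      · intro z hz
        have h1 : (1:ℝ) ≤ f z := hf.2 z hz
        have hlt : 1 / (1 + η) < 1 := by
          rw [div_lt_one (by linarith)]
          linarith
        exact lt_of_lt_of_le hlt h1
      · intro z hz
        have hz' : 1 / (1 + η) < f z := hz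
        exact (hz'.le : 1 / (1 + η) ≤ f z)
    have hmem : (1 + η) • f ∈ FF K' := by
      constructor
      · intro z
        simpa [ContinuousMap.smul_apply] using
          mul_nonneg (by linarith : (0:ℝ) ≤ 1 + η) (hf.1 z)
      · intro z hz
        have hz' : 1 / (1 + η) ≤ f z := hz
        have h1η : (0:ℝ) < 1 + η := by linarith
        simp only [ContinuousMap.smul_apply, smul_eq_mul]
        calc (1:ℝ) = (1 + η) * (1 / (1 + η)) := by field_simp
          _ ≤ (1 + η) * f z := by
            apply mul_le_mul_of_nonneg_left hz' (le_of_lt h1η)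
    have hbound : cfn L K' ≤ cfn L K.1 + ε := by
      have h1 : cfn L K' ≤ L ((1 + η) • f) := cfn_le L hL hmem
      have h2 : L ((1 + η) • f) = (1 + η) * L f := by
        rw [L.map_smul, smul_eq_mul]
      have h3 : η * L f ≤ ε / 2 := by
        rw [hη]
        rw [div_mul_eq_mul_div, div_le_iff₀ (by linarith)]
        nlinarith
      have h4 : L f ≤ cfn L K.1 + ε / 2 := le_of_lt hfe
      calc cfn L K' ≤ (1 + η) * L f := h1.trans_eq h2
        _ = L f + η * L f := by ring
        _ ≤ cfn L K.1 + ε / 2 + ε / 2 := by linarith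
        _ = cfn L K.1 + ε := by ring
    -- now conclude in ℝ≥0∞
    have hKc : IsCompact K' := hK'closed.isCompact
    refine le_trans (iInf_le_of_le ⟨K', hKc⟩ (iInf_le_of_le hKsub le_rfl)) ?_
    show ((cfn L K').toNNReal : ℝ≥0∞) ≤ ((cfn L K.1).toNNReal : ℝ≥0∞) + (ε : ℝ≥0∞)
    rw [← ENNReal.coe_add]
    rw [ENNReal.coe_le_coe]
    calc (cfn L K').toNNReal ≤ (cfn L K.1 + ε).toNNReal := Real.toNNReal_mono hbound
      _ = (cfn L K.1).toNNReal + ε := by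
        rw [Real.toNNReal_add (cfn_nonneg L hL K.carrier) ε.coe_nonneg, Real.toNNReal_coe]


lemma cfn_univ : cfn L (univ : Set Z) = L 1 :=
  le_antisymm (cfn_le L hL (one_mem_FF univ))
    (le_cfn L hL fun f hf => L_mono L hL fun z => by simpa using hf.2 z (mem_univ z))

omit hL in
lemma clamp_eq {t A B : ℝ} (hB : 0 ≤ B) :
    min (max (t - A) 0) B = min t (A + B) - min t A := by
  rcases le_total t A with h | h
  · rw [max_eq_right (by linarith), min_eq_left hB, min_eq_left h,
      min_eq_left (by linarith : t ≤ A + B)]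
    ring
  · rw [max_eq_left (by linarith)]
    rcases le_total t (A + B) with h2 | h2
    · rw [min_eq_left (by linarith : t - A ≤ B), min_eq_left h2, min_eq_right h]
    · rw [min_eq_right (by linarith : B ≤ t - A), min_eq_right h2, min_eq_right h]
      ring

omit hL in
lemma continuous_integrable {W : Type*} [TopologicalSpace W] [CompactSpace W] [T2Space W]
    [MeasurableSpace W] [OpensMeasurableSpace W] {κ : Measure W} [IsFiniteMeasure κ]
    {f : W → ℝ} (hf : Continuous f) : Integrable f κ :=
  hf.integrable_of_hasCompactSupport (HasCompactSupport.of_compactSpace f)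

variable [MeasurableSpace Z] [BorelSpace Z]

/-- The Riesz measure associated with a positive linear functional. -/
def rMeasure : Measure Z := (rContent L hL).measure

lemma rMeasure_closed {F : Set Z} (hF : IsClosed F) :
    rMeasure L hL F = ((cfn L F).toNNReal : ℝ≥0∞) :=
  MeasureTheory.Content.measure_eq_content_of_regular _ (rContent_regular L hL)
    ⟨F, hF.isCompact⟩

lemma rMeasure_closed_toReal {F : Set Z} (hF : IsClosed F) :
    (rMeasure L hL F).toReal = cfn L F := by
  rw [rMeasure_closed L hL hF]
  simp [Real.coe_toNNReal _ (cfn_nonneg L hL F)]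

instance : IsFiniteMeasure (rMeasure L hL) := by
  constructor
  rw [rMeasure_closed L hL isClosed_univ]
  exact ENNReal.coe_lt_top

lemma abs_integral_sub_le (g : C(Z, ℝ)) (hg : ∀ z, g z ∈ Icc (0:ℝ) 1) (n : ℕ) (hn : 0 < n) :
    |∫ z, g z ∂(rMeasure L hL) - L g| ≤ (rMeasure L hL univ).toReal / n := by
  set γ := rMeasure L hL with hγdef
  have hnR : (0:ℝ) < n := Nat.cast_pos.mpr hn
  set K : ℕ → Set Z := fun i => {z | (i : ℝ) / n ≤ g z} with hK
  have hKclosed : ∀ i, IsClosed (K i) := fun i => isClosed_le continuous_const g.continuous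
  set a : ℕ → ℝ := fun i => (γ (K i)).toReal with ha
  have ha_nonneg : ∀ i, 0 ≤ a i := fun i => ENNReal.toReal_nonneg
  have ha_cfn : ∀ i, a i = cfn L (K i) := fun i => rMeasure_closed_toReal L hL (hKclosed i)
  set gi : ℕ → C(Z, ℝ) := fun i =>
    ⟨fun z => min (max (g z - i / n) 0) (1 / n), by
      apply Continuous.min
      · exact (g.continuous.sub continuous_const).max continuous_const
      · exact continuous_const⟩ with hgi
  have gi_apply : ∀ i z, gi i z = min (max (g z - i / n) 0) (1 / n) := fun i z => rfl
  have gi_nonneg : ∀ i z, 0 ≤ gi i z := fun i z =>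
    le_min (le_max_right _ _) (by positivity)
  have gi_le : ∀ i z, gi i z ≤ 1 / n := fun i z => min_le_right _ _
  have gi_on : ∀ i z, ((i+1 : ℕ) : ℝ) / n ≤ g z → gi i z = 1 / n := by
    intro i z hz
    have hzi : (i : ℝ) / n + 1 / n ≤ g z := by
      have : ((i+1 : ℕ) : ℝ) / n = (i : ℝ) / n + 1 / n := by push_cast; ring
      linarith [this ▸ hz]
    rw [gi_apply, max_eq_left (by linarith [one_div_pos.mpr hnR]), min_eq_right (by linarith)]
  have gi_off : ∀ (i : ℕ) (z : Z), g z < (i : ℝ) / n → gi i z = 0 := by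
    intro i z hz
    rw [gi_apply, max_eq_right (by linarith), min_eq_left (by positivity)]
  have sum_gi : ∀ z, ∑ i ∈ Finset.range n, gi i z = g z := by
    intro z
    calc ∑ i ∈ Finset.range n, gi i z
        = ∑ i ∈ Finset.range n,
            (min (g z) (((i+1 : ℕ) : ℝ) / n) - min (g z) ((i : ℝ) / n)) := by
          refine Finset.sum_congr rfl fun i _ => ?_
          rw [gi_apply, clamp_eq (by positivity)]
          have : (i : ℝ) / n + 1 / n = ((i+1 : ℕ) : ℝ) / n := by push_cast; ring
          rw [this]
      _ = min (g z) ((n : ℝ) / n) - min (g z) (((0:ℕ) : ℝ) / n) :=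
          Finset.sum_range_sub (fun i => min (g z) ((i : ℝ) / n)) n
      _ = g z := by
          rw [div_self (ne_of_gt hnR)]
          simp only [Nat.cast_zero, zero_div]
          rw [min_eq_left (hg z).2, min_eq_right (hg z).1]
          ring
  have smul_eq : ∀ i, L ((n : ℝ) • gi i) = (n : ℝ) * L (gi i) := by
    intro i; rw [L.map_smul, smul_eq_mul]
  have L_le : ∀ i, (n : ℝ) * L (gi i) ≤ a i := by
    intro i
    rw [ha_cfn, ← smul_eq]
    apply le_cfn L hL
    intro f hf
    apply L_mono L hL
    intro z
    rw [ContinuousMap.smul_apply, smul_eq_mul]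
    rcases le_or_gt ((i : ℝ) / n) (g z) with h | h
    · calc (n : ℝ) * gi i z ≤ (n : ℝ) * (1 / n) :=
            mul_le_mul_of_nonneg_left (gi_le i z) (le_of_lt hnR)
        _ = 1 := by field_simp
        _ ≤ f z := hf.2 z h
    · rw [gi_off i z h, mul_zero]
      exact hf.1 z
  have le_L : ∀ i, a (i+1) ≤ (n : ℝ) * L (gi i) := by
    intro i
    rw [ha_cfn, ← smul_eq]
    apply cfn_le L hL
    constructor
    · intro z
      rw [ContinuousMap.smul_apply, smul_eq_mul]
      exact mul_nonneg (le_of_lt hnR) (gi_nonneg i z)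
    · intro z hz
      rw [ContinuousMap.smul_apply, smul_eq_mul, gi_on i z hz]
      rw [mul_one_div, div_self (ne_of_gt hnR)]
  have integ_gi : ∀ i, Integrable (fun z => gi i z) γ :=
    fun i => continuous_integrable (gi i).continuous
  have integ_ind : ∀ i, Integrable ((K i).indicator (fun _ => 1 / (n:ℝ))) γ :=
    fun i => (integrable_const _).indicator (hKclosed i).measurableSet
  have int_ind : ∀ i, ∫ z, (K i).indicator (fun _ => 1 / (n:ℝ)) z ∂γ = a i * (1 / n) := by
    intro i
    rw [MeasureTheory.integral_indicator_const _ (hKclosed i).measurableSet]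
    simp [ha, smul_eq_mul]
    exact Or.inl rfl
  have int_le : ∀ i, ∫ z, gi i z ∂γ ≤ a i * (1 / n) := by
    intro i
    rw [← int_ind i]
    apply integral_mono (integ_gi i) (integ_ind i)
    intro z
    beta_reduce
    rcases le_or_gt ((i : ℝ) / n) (g z) with h | h
    · have : z ∈ K i := h
      rw [indicator_of_mem this]
      exact gi_le i z
    · rw [indicator_of_notMem (by exact fun hz => absurd hz (not_le.mpr h)), gi_off i z h]
  have le_int : ∀ i, a (i+1) * (1 / n) ≤ ∫ z, gi i z ∂γ := by
    intro i
    rw [← int_ind (i+1)]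
    apply integral_mono (integ_ind (i+1)) (integ_gi i)
    intro z
    beta_reduce
    rcases le_or_gt (((i+1:ℕ) : ℝ) / n) (g z) with h | h
    · have : z ∈ K (i+1) := h
      rw [indicator_of_mem this, gi_on i z h]
    · rw [indicator_of_notMem (by exact fun hz => absurd hz (not_le.mpr h))]
      exact gi_nonneg i z
  -- assemble
  have hL_sum : L g = ∑ i ∈ Finset.range n, L (gi i) := by
    rw [← map_sum]
    congr 1
    ext z
    rw [ContinuousMap.sum_apply]
    exact (sum_gi z).symm
  have hint_sum : ∫ z, g z ∂γ = ∑ i ∈ Finset.range n, ∫ z, gi i z ∂γ := by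
    rw [← MeasureTheory.integral_finset_sum _ (fun i _ => integ_gi i)]
    have : (fun z => g z) = fun z => ∑ i ∈ Finset.range n, gi i z :=
      funext fun z => (sum_gi z).symm
    rw [this]
  set lo : ℝ := ∑ i ∈ Finset.range n, a (i+1) * (1 / n) with hlo
  set hi : ℝ := ∑ i ∈ Finset.range n, a i * (1 / n) with hhi
  have h1 : lo ≤ ∫ z, g z ∂γ := by
    rw [hint_sum]
    exact Finset.sum_le_sum fun i _ => le_int i
  have h2 : ∫ z, g z ∂γ ≤ hi := by
    rw [hint_sum]
    exact Finset.sum_le_sum fun i _ => int_le i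
  have h3 : lo ≤ L g := by
    rw [hL_sum]
    refine Finset.sum_le_sum fun i _ => ?_
    have := le_L i
    have h4 := mul_le_mul_of_nonneg_right this (le_of_lt (one_div_pos.mpr hnR))
    calc a (i+1) * (1/n) ≤ ((n:ℝ) * L (gi i)) * (1/n) := h4
      _ = L (gi i) := by field_simp
  have h4 : L g ≤ hi := by
    rw [hL_sum]
    refine Finset.sum_le_sum fun i _ => ?_
    have := L_le i
    have h5 := mul_le_mul_of_nonneg_right this (le_of_lt (one_div_pos.mpr hnR))
    calc L (gi i) = ((n:ℝ) * L (gi i)) * (1/n) := by field_simp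
      _ ≤ a i * (1/n) := h5
  have hdiff : hi - lo ≤ (γ univ).toReal / n := by
    have e1 : hi - lo = (a 0 - a n) * (1/n) := by
      rw [hhi, hlo, ← Finset.sum_sub_distrib]
      have : ∀ i, a i * (1/n) - a (i+1) * (1/n) = (fun j => a j * (1/(n:ℝ))) i
          - (fun j => a j * (1/(n:ℝ))) (i+1) := fun i => rfl
      rw [Finset.sum_congr rfl fun i _ => this i, Finset.sum_range_sub' (fun j => a j * (1/(n:ℝ))) n]
      ring
    have e2 : a 0 ≤ (γ univ).toReal := by
      apply ENNReal.toReal_mono (measure_ne_top γ univ)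
      exact measure_mono (subset_univ _)
    rw [e1]
    calc (a 0 - a n) * (1/n) ≤ (γ univ).toReal * (1/n) := by
          apply mul_le_mul_of_nonneg_right _ (le_of_lt (one_div_pos.mpr hnR))
          have := ha_nonneg n
          linarith
      _ = (γ univ).toReal / n := by ring
  have : |∫ z, g z ∂γ - L g| ≤ hi - lo := abs_le.mpr ⟨by linarith, by linarith⟩
  linarith

theorem integral_rMeasure (f : C(Z, ℝ)) : ∫ z, f z ∂(rMeasure L hL) = L f := by
  set γ := rMeasure L hL with hγdef
  have icc : ∀ g : C(Z, ℝ), (∀ z, g z ∈ Icc (0:ℝ) 1) → ∫ z, g z ∂γ = L g := by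
    intro g hg
    by_contra hne
    have habs : 0 < |∫ z, g z ∂γ - L g| := abs_pos.mpr (sub_ne_zero.mpr hne)
    set d := |∫ z, g z ∂γ - L g| with hd
    set B := (γ univ).toReal with hB
    have hB0 : 0 ≤ B := ENNReal.toReal_nonneg
    obtain ⟨n, hn⟩ := exists_nat_gt (B / d)
    have hn0 : 0 < n := by
      have : (0:ℝ) ≤ B / d := div_nonneg hB0 (le_of_lt habs)
      exact_mod_cast lt_of_le_of_lt this hn |>.trans_le (le_refl _) |> Nat.cast_pos.mp
    have hkey := abs_integral_sub_le L hL g hg n hn0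
    have hnR : (0:ℝ) < n := Nat.cast_pos.mpr hn0
    have : B / n < d := by
      rw [div_lt_iff₀ hnR]
      rw [div_lt_iff₀ habs] at hn
      linarith
    rw [← hd, ← hB] at hkey
    linarith
  set C := ‖f‖ + 1 with hC
  have hC0 : 0 < C := by positivity
  set g : C(Z, ℝ) := (2*C)⁻¹ • (f + ContinuousMap.const Z C) with hg
  have hfz : ∀ z, |f z| ≤ ‖f‖ := fun z => by
    have := f.norm_coe_le_norm z
    rwa [Real.norm_eq_abs] at this
  have hg01 : ∀ z, g z ∈ Icc (0:ℝ) 1 := by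
    intro z
    have h1 := abs_le.mp (hfz z)
    have hgz : g z = (2*C)⁻¹ * (f z + C) := by
      rw [hg]
      simp only [ContinuousMap.smul_apply, ContinuousMap.add_apply, ContinuousMap.const_apply,
        smul_eq_mul]
    constructor
    · rw [hgz]
      apply mul_nonneg (by positivity)
      have : -C ≤ f z := by simp only [hC]; linarith [h1.1]
      linarith
    · rw [hgz, inv_mul_le_iff₀ (by positivity)]
      have : f z ≤ C := by simp only [hC]; linarith [h1.2]
      linarith
  have hgi := icc g hg01
  have hγu : (γ univ).toReal = L 1 := by
    rw [hγdef, rMeasure_closed_toReal L hL isClosed_univ, cfn_univ L hL]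
  have hconst : (ContinuousMap.const Z C) = C • (1 : C(Z, ℝ)) := by
    ext z; simp
  have hLg : L g = (2*C)⁻¹ * (L f + C * L 1) := by
    rw [hg, L.map_smul, map_add, hconst, L.map_smul, smul_eq_mul, smul_eq_mul]
  have hInt : ∫ z, g z ∂γ = (2*C)⁻¹ * (∫ z, f z ∂γ + C * L 1) := by
    have e0 : ∀ z, g z = (2*C)⁻¹ * (f z + C) := by
      intro z
      rw [hg]
      simp only [ContinuousMap.smul_apply, ContinuousMap.add_apply, ContinuousMap.const_apply,
        smul_eq_mul]
    rw [integral_congr_ae (Filter.Eventually.of_forall e0)]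
    rw [MeasureTheory.integral_const_mul]
    congr 1
    rw [MeasureTheory.integral_add (continuous_integrable f.continuous) (integrable_const C),
      MeasureTheory.integral_const, smul_eq_mul, measureReal_def, hγu]
    ring
  rw [hInt, hLg] at hgi
  have h2C : ((2:ℝ)*C) ≠ 0 := by positivity
  have := mul_left_cancel₀ (inv_ne_zero h2C) hgi
  linarith

lemma rMeasure_univ_eq_one (h1 : L 1 = 1) : rMeasure L hL univ = 1 := by
  rw [rMeasure_closed L hL isClosed_univ, cfn_univ L hL, h1]
  simp


end Riesz

section Dual


variable {X Y : Type*} [MetricSpace X] [CompactSpace X] [MeasurableSpace X] [BorelSpace X]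
    [MetricSpace Y] [CompactSpace Y] [MeasurableSpace Y] [BorelSpace Y]


/-- The continuous function `(x,y) ↦ u x + v y`. -/
def pl (u : C(X, ℝ)) (v : C(Y, ℝ)) : C(X × Y, ℝ) :=
  u.comp ContinuousMap.fst + v.comp ContinuousMap.snd

lemma pl_apply (u : C(X, ℝ)) (v : C(Y, ℝ)) (p : X × Y) : pl u v p = u p.1 + v p.2 := rfl

lemma pl_smul (t : ℝ) (u : C(X, ℝ)) (v : C(Y, ℝ)) :
    pl (t • u) (t • v) = t • pl u v := by
  ext p
  simp [pl_apply]
  ring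

lemma pl_comb (s t : ℝ) (u₁ u₂ : C(X, ℝ)) (v₁ v₂ : C(Y, ℝ)) :
    pl (s • u₁ + t • u₂) (s • v₁ + t • v₂) = s • pl u₁ v₁ + t • pl u₂ v₂ := by
  ext p
  simp [pl_apply]
  ring

lemma int_comb (s t : ℝ) (u₁ u₂ : C(X, ℝ)) (μ : Measure X) [IsFiniteMeasure μ] :
    ∫ x, (s • u₁ + t • u₂) x ∂μ = s * ∫ x, u₁ x ∂μ + t * ∫ x, u₂ x ∂μ := by
  have e : ∀ x, (s • u₁ + t • u₂) x = s * u₁ x + t * u₂ x := by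
    intro x
    simp [ContinuousMap.add_apply, ContinuousMap.smul_apply, smul_eq_mul]
  rw [integral_congr_ae (Filter.Eventually.of_forall e)]
  rw [integral_add ((continuous_integrable u₁.continuous).const_mul s)
    ((continuous_integrable u₂.continuous).const_mul t),
    integral_const_mul, integral_const_mul]

lemma int_smul (t : ℝ) (u : C(X, ℝ)) (μ : Measure X) [IsFiniteMeasure μ] :
    ∫ x, (t • u) x ∂μ = t * ∫ x, u x ∂μ := by
  have e : ∀ x, (t • u) x = t * u x := fun x => by
    simp [ContinuousMap.smul_apply, smul_eq_mul]
  rw [integral_congr_ae (Filter.Eventually.of_forall e), integral_const_mul]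

lemma weak_duality {c : X × Y → ℝ} (hc : Continuous c)
    {μ : Measure X} {ν : Measure Y} [IsProbabilityMeasure μ] [IsProbabilityMeasure ν]
    {γ' : Measure (X × Y)} (h1 : γ'.map Prod.fst = μ) (h2 : γ'.map Prod.snd = ν)
    {u : X → ℝ} {v : Y → ℝ} (hu : Integrable u μ) (hv : Integrable v ν)
    (hfeas : ∀ x y, -u x - v y ≤ c (x, y)) :
    -∫ x, u x ∂μ - ∫ y, v y ∂ν ≤ ∫ p, c p ∂γ' := by
  haveI : IsProbabilityMeasure γ' := by
    constructor
    have e : γ' univ = (γ'.map Prod.fst) univ := by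
      rw [Measure.map_apply measurable_fst MeasurableSet.univ, preimage_univ]
    rw [e, h1, measure_univ]
  have huγ : Integrable (fun p : X × Y => u p.1) γ' := by
    have h := hu
    rw [← h1] at h
    exact (integrable_map_measure h.aestronglyMeasurable measurable_fst.aemeasurable).mp h
  have hvγ : Integrable (fun p : X × Y => v p.2) γ' := by
    have h := hv
    rw [← h2] at h
    exact (integrable_map_measure h.aestronglyMeasurable measurable_snd.aemeasurable).mp h
  have hcγ : Integrable c γ' := continuous_integrable hc
  have hiu : ∫ p : X × Y, u p.1 ∂γ' = ∫ x, u x ∂μ := by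
    rw [← h1]
    exact (integral_map measurable_fst.aemeasurable
      (by rw [h1]; exact hu.aestronglyMeasurable)).symm
  have hiv : ∫ p : X × Y, v p.2 ∂γ' = ∫ y, v y ∂ν := by
    rw [← h2]
    exact (integral_map measurable_snd.aemeasurable
      (by rw [h2]; exact hv.aestronglyMeasurable)).symm
  have hneg : Integrable (fun p : X × Y => -u p.1) γ' := huγ.neg
  have e : ∫ p : X × Y, (-u p.1 - v p.2) ∂γ' = -∫ x, u x ∂μ - ∫ y, v y ∂ν := by
    rw [integral_sub hneg hvγ, integral_neg, hiu, hiv]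
  have hmono : ∫ p : X × Y, (-u p.1 - v p.2) ∂γ' ≤ ∫ p, c p ∂γ' :=
    integral_mono (hneg.sub hvγ) hcγ (fun p => by simpa using hfeas p.1 p.2)
  rw [e] at hmono
  exact hmono

end Dual

end KantorovichAux

open KantorovichAux

/-- **Kantorovich–Koopmans duality.**  For compact Polish spaces `M⁺, M⁻`, a continuous
cost `c` and Borel probability measures `μ⁺, μ⁻`, the Kantorovich minimum over transport
plans `γ ∈ Γ(μ⁺,μ⁻)` is attained and equals the dual supremum of
`−∫ u dμ⁺ − ∫ v dμ⁻` over pairs `(−u,−v) ∈ Lip_c`, i.e. over integrable `u, v` with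
`c(x,y) ≥ −u(x) − v(y)` everywhere. -/
theorem kantorovich_duality
    {X Y : Type*} [MetricSpace X] [CompactSpace X] [MeasurableSpace X] [BorelSpace X]
    [MetricSpace Y] [CompactSpace Y] [MeasurableSpace Y] [BorelSpace Y]
    (c : X × Y → ℝ) (hc : Continuous c)
    (μ : Measure X) (ν : Measure Y) [IsProbabilityMeasure μ] [IsProbabilityMeasure ν] :
    ∃ γ : Measure (X × Y), IsCoupling γ μ ν ∧
      (∀ γ' : Measure (X × Y), IsCoupling γ' μ ν → ∫ p, c p ∂γ ≤ ∫ p, c p ∂γ') ∧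
      ∫ p, c p ∂γ =
        sSup {r : ℝ | ∃ u : X → ℝ, ∃ v : Y → ℝ, Integrable u μ ∧ Integrable v ν ∧
          (∀ x : X, ∀ y : Y, -u x - v y ≤ c (x, y)) ∧
          r = -∫ x, u x ∂μ - ∫ y, v y ∂ν} := by
  haveI hXne : Nonempty X := by
    by_contra h
    rw [not_nonempty_iff] at h
    have h0 : μ univ = 1 := measure_univ
    rw [show (univ : Set X) = ∅ from univ_eq_empty_iff.mpr h, measure_empty] at h0
    exact zero_ne_one h0
  haveI hYne : Nonempty Y := by
    by_contra h
    rw [not_nonempty_iff] at h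
    have h0 : ν univ = 1 := measure_univ
    rw [show (univ : Set Y) = ∅ from univ_eq_empty_iff.mpr h, measure_empty] at h0
    exact zero_ne_one h0
  set cM : C(X × Y, ℝ) := ⟨c, hc⟩ with hcM
  have hcMapp : ∀ p : X × Y, cM p = c p := fun p => rfl
  have hcbound : ∀ p : X × Y, |c p| ≤ ‖cM‖ := by
    intro p
    have := cM.norm_coe_le_norm p
    rwa [Real.norm_eq_abs, hcMapp] at this
  set Sset : Set ℝ := {r : ℝ | ∃ u : X → ℝ, ∃ v : Y → ℝ, Integrable u μ ∧ Integrable v ν ∧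
          (∀ x : X, ∀ y : Y, -u x - v y ≤ c (x, y)) ∧
          r = -∫ x, u x ∂μ - ∫ y, v y ∂ν} with hSset
  have hne : Sset.Nonempty := by
    refine ⟨-∫ _x, (fun _ : X => ‖cM‖) _x ∂μ - ∫ _y, (fun _ : Y => (0:ℝ)) _y ∂ν,
      (fun _ => ‖cM‖), (fun _ => 0), integrable_const _, integrable_const _, ?_, rfl⟩
    intro x y
    have h1 := (abs_le.mp (hcbound (x, y))).1
    have h2 : (0:ℝ) ≤ ‖cM‖ := norm_nonneg _
    simp only
    linarith
  have hbdd : BddAbove Sset := by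
    refine ⟨∫ p, c p ∂(μ.prod ν), ?_⟩
    rintro r ⟨u, v, hu, hv, hfeas, rfl⟩
    exact weak_duality hc Measure.fst_prod Measure.snd_prod hu hv hfeas
  set S := sSup Sset with hS
  have hmemS : ∀ (u : C(X, ℝ)) (v : C(Y, ℝ)), (∀ p : X × Y, -c p ≤ pl u v p) →
      -∫ x, u x ∂μ - ∫ y, v y ∂ν ≤ S := by
    intro u v hfe
    apply le_csSup hbdd
    refine ⟨u, v, continuous_integrable u.continuous, continuous_integrable v.continuous,
      ?_, rfl⟩
    intro x y
    have := hfe (x, y)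
    rw [pl_apply] at this
    simp only at this ⊢
    linarith
  -- separation setup
  set A₁ : Set C(X × Y, ℝ) := {f | ∀ p, -c p < f p} with hA₁
  set A : Set (C(X × Y, ℝ) × ℝ) := A₁ ×ˢ Ioi (0:ℝ) with hA
  set B : Set (C(X × Y, ℝ) × ℝ) := {q | ∃ u : C(X, ℝ), ∃ v : C(Y, ℝ), q.1 = pl u v ∧
      q.2 ≤ -S - ∫ x, u x ∂μ - ∫ y, v y ∂ν} with hB
  have hA₁open : IsOpen A₁ := by
    rw [Metric.isOpen_iff]
    intro f hf
    obtain ⟨p₀, -, hp₀⟩ := isCompact_univ.exists_isMinOn univ_nonempty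
      ((f.continuous.add hc).continuousOn)
    set δ := f p₀ + c p₀ with hδdef
    have hδ : 0 < δ := by
      have this : -c p₀ < f p₀ := hf p₀
      linarith
    refine ⟨δ, hδ, fun g hg => ?_⟩
    intro p
    have h1 : |g p - f p| ≤ dist g f := by
      have := ContinuousMap.dist_apply_le_dist (f := g) (g := f) p
      rwa [Real.dist_eq] at this
    have h2 : f p₀ + c p₀ ≤ f p + c p := hp₀ (mem_univ p)
    have h3 : dist g f < δ := Metric.mem_ball.mp hg
    have h4 := (abs_le.mp h1).1
    linarith
  have hA₁conv : Convex ℝ A₁ := by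
    intro f hf g hg s t hs ht hst
    intro p
    have h1 : -c p < f p := hf p
    have h2 : -c p < g p := hg p
    show -c p < (s • f + t • g) p
    simp only [ContinuousMap.add_apply, ContinuousMap.smul_apply, smul_eq_mul]
    rcases eq_or_lt_of_le hs with hs0 | hs0
    · have : t = 1 := by linarith
      rw [← hs0, this]
      simpa using h2
    · have e1 : s * (-c p) < s * f p := by exact (mul_lt_mul_iff_right₀ hs0).mpr h1
      have e2 : t * (-c p) ≤ t * g p := mul_le_mul_of_nonneg_left h2.le ht
      have e3 : s * (-c p) + t * (-c p) = -c p := by rw [← add_mul, hst, one_mul]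
      linarith
  have hAopen : IsOpen A := hA₁open.prod isOpen_Ioi
  have hAconv : Convex ℝ A := hA₁conv.prod (convex_Ioi 0)
  have hBconv : Convex ℝ B := by
    rintro ⟨f₁, b₁⟩ ⟨u₁, v₁, hf₁, hb₁⟩ ⟨f₂, b₂⟩ ⟨u₂, v₂, hf₂, hb₂⟩ s t hs ht hst
    simp only [hB, mem_setOf_eq] at hf₁ hf₂ hb₁ hb₂ ⊢
    refine ⟨s • u₁ + t • u₂, s • v₁ + t • v₂, ?_, ?_⟩
    · show s • f₁ + t • f₂ = _
      rw [hf₁, hf₂, pl_comb]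
    · show s * b₁ + t * b₂ ≤ _
      rw [int_comb, int_comb]
      have e1 : s * b₁ ≤ s * (-S - ∫ x, u₁ x ∂μ - ∫ y, v₁ y ∂ν) :=
        mul_le_mul_of_nonneg_left hb₁ hs
      have e2 : t * b₂ ≤ t * (-S - ∫ x, u₂ x ∂μ - ∫ y, v₂ y ∂ν) :=
        mul_le_mul_of_nonneg_left hb₂ ht
      have e3 : s * (-S) + t * (-S) = -S := by rw [← add_mul, hst, one_mul]
      linarith
  have hdisj : Disjoint A B := by
    rw [Set.disjoint_left]
    rintro ⟨f, b⟩ ⟨hstrict, hbpos⟩ ⟨u, v, heq, hble⟩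
    simp only [hA₁, mem_setOf_eq] at hstrict
    simp only at heq hble
    have hfe : ∀ p : X × Y, -c p ≤ pl u v p := by
      intro p
      rw [← heq]
      exact (hstrict p).le
    have h1 := hmemS u v hfe
    have h2 : (0:ℝ) < b := hbpos
    linarith
  obtain ⟨F, s₀, hFA, hFB⟩ := geometric_hahn_banach_open hAconv hAopen hBconv hdisj
  set ℓ : C(X × Y, ℝ) → ℝ := fun f => F (f, 0) with hℓ
  set α : ℝ := F (0, 1) with hα
  have hF : ∀ (f : C(X × Y, ℝ)) (a : ℝ), F (f, a) = ℓ f + a * α := by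
    intro f a
    have e : (f, a) = ((f, (0:ℝ)) + a • ((0 : C(X × Y, ℝ)), (1:ℝ))) := by
      simp [Prod.ext_iff]
    rw [e, map_add, _root_.map_smul, smul_eq_mul]
  have hℓadd : ∀ f g : C(X × Y, ℝ), ℓ (f + g) = ℓ f + ℓ g := by
    intro f g
    have e : ((f + g : C(X × Y, ℝ)), (0:ℝ)) = (f, (0:ℝ)) + (g, (0:ℝ)) := by simp
    simp only [hℓ]
    rw [e, map_add]
  have hℓsmul : ∀ (t : ℝ) (f : C(X × Y, ℝ)), ℓ (t • f) = t * ℓ f := by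
    intro t f
    have e : ((t • f : C(X × Y, ℝ)), (0:ℝ)) = t • (f, (0:ℝ)) := by simp
    simp only [hℓ]
    rw [e, _root_.map_smul, smul_eq_mul]
  have hA' : ∀ (f : C(X × Y, ℝ)) (a : ℝ), (∀ p, -c p < f p) → 0 < a → ℓ f + a * α < s₀ := by
    intro f a h1 h2
    have := hFA (f, a) (Set.mem_prod.mpr ⟨h1, h2⟩)
    rwa [hF] at this
  have hB' : ∀ (u : C(X, ℝ)) (v : C(Y, ℝ)) (b : ℝ),
      b ≤ -S - ∫ x, u x ∂μ - ∫ y, v y ∂ν → s₀ ≤ ℓ (pl u v) + b * α := by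
    intro u v b hb
    have := hFB (pl u v, b) ⟨u, v, rfl, hb⟩
    rwa [hF] at this
  set f₀ : C(X × Y, ℝ) := ContinuousMap.const (X × Y) (‖cM‖ + 1) with hf₀
  have hconstfeas : ∀ p : X × Y, -c p < f₀ p := by
    intro p
    have h1 := (abs_le.mp (hcbound p)).1
    simp only [hf₀, ContinuousMap.const_apply]
    linarith
  have hαle : α ≤ 0 := by
    by_contra h
    push_neg at h
    have h1 := hA' f₀ 1 hconstfeas one_pos
    have h2 := hA' f₀ ((s₀ - ℓ f₀) / α) hconstfeas
      (div_pos (by linarith) h)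
    rw [div_mul_cancel₀ _ (ne_of_gt h)] at h2
    linarith
  have hkey : ∀ (u : C(X, ℝ)) (v : C(Y, ℝ)),
      ℓ (pl u v) = (∫ x, u x ∂μ + ∫ y, v y ∂ν) * α := by
    intro u v
    set k := ℓ (pl u v) - (∫ x, u x ∂μ + ∫ y, v y ∂ν) * α with hk
    have hall : ∀ t : ℝ, s₀ ≤ t * k + (-S) * α := by
      intro t
      have h0 := hB' (t • u) (t • v) (-S - ∫ x, (t • u) x ∂μ - ∫ y, (t • v) y ∂ν) le_rfl
      rw [pl_smul, hℓsmul, int_smul, int_smul] at h0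
      have heq : t * ℓ (pl u v) + (-S - t * ∫ x, u x ∂μ - t * ∫ y, v y ∂ν) * α
          = t * k + (-S) * α := by
        rw [hk]; ring
      linarith
    have hk0 : k = 0 := by
      by_contra hk0
      have := hall ((s₀ - (-S) * α - 1) / k)
      rw [div_mul_cancel₀ _ hk0] at this
      linarith
    have : ℓ (pl u v) - (∫ x, u x ∂μ + ∫ y, v y ∂ν) * α = 0 := by rw [← hk, hk0]
    linarith
  have hsS : s₀ ≤ (-S) * α := by
    have h0 := hB' 0 0 (-S - ∫ x, (0 : C(X, ℝ)) x ∂μ - ∫ y, (0 : C(Y, ℝ)) y ∂ν) le_rfl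
    have hz1 : ∫ x, (0 : C(X, ℝ)) x ∂μ = 0 := by simp
    have hz2 : ∫ y, (0 : C(Y, ℝ)) y ∂ν = 0 := by simp
    rw [hkey, hz1, hz2] at h0
    simp only [add_zero, zero_mul, zero_add] at h0
    linarith [h0]
  have hconstpl : f₀ = pl (ContinuousMap.const X (‖cM‖ + 1)) 0 := by
    ext p
    simp [hf₀, pl_apply]
  have hαneg : α < 0 := by
    rcases lt_or_eq_of_le hαle with h | h
    · exact h
    · exfalso
      have h1 := hA' f₀ 1 hconstfeas one_pos
      have h2 : ℓ f₀ = (∫ x, (ContinuousMap.const X (‖cM‖ + 1)) x ∂μ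
          + ∫ y, (0 : C(Y, ℝ)) y ∂ν) * α := by
        rw [hconstpl, hkey]
      rw [h] at h2
      rw [h2] at h1
      rw [h] at hsS
      simp only [mul_zero, zero_add, one_mul, zero_mul] at h1 hsS
      linarith
  have hfeasb : ℓ (-cM) ≤ s₀ := by
    have hstep : ∀ ε : ℝ, 0 < ε → ℓ (-cM) + ε * (ℓ 1 + α) < s₀ := by
      intro ε hε
      have hstrict : ∀ p, -c p < (-cM + ε • (1 : C(X × Y, ℝ))) p := by
        intro p
        simp only [ContinuousMap.add_apply, ContinuousMap.neg_apply,
          ContinuousMap.smul_apply, ContinuousMap.one_apply, smul_eq_mul, mul_one, hcMapp]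
        linarith
      have h0 := hA' (-cM + ε • 1) ε hstrict hε
      rw [hℓadd, hℓsmul] at h0
      ring_nf at h0 ⊢
      linarith
    have htend : Filter.Tendsto (fun ε : ℝ => ℓ (-cM) + ε * (ℓ 1 + α))
        (nhdsWithin 0 (Ioi 0)) (nhds (ℓ (-cM))) := by
      have hcont : Continuous fun ε : ℝ => ℓ (-cM) + ε * (ℓ 1 + α) :=
        continuous_const.add (continuous_id.mul continuous_const)
      have h0 := hcont.tendsto 0
      simp only [zero_mul, add_zero] at h0
      exact h0.mono_left nhdsWithin_le_nhds
    apply le_of_tendsto htend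
    filter_upwards [self_mem_nhdsWithin] with ε hε
    exact (hstep ε hε).le
  have hpos : ∀ h : C(X × Y, ℝ), (∀ p, 0 ≤ h p) → ℓ h ≤ 0 := by
    intro h hh
    by_contra hcon
    push_neg at hcon
    have hstrict : ∀ (t : ℝ), 0 ≤ t → ∀ p, -c p < (f₀ + t • h) p := by
      intro t ht p
      have h1 := (abs_le.mp (hcbound p)).1
      have h2 := mul_nonneg ht (hh p)
      simp only [ContinuousMap.add_apply, ContinuousMap.smul_apply, smul_eq_mul, hf₀,
        ContinuousMap.const_apply]
      linarith
    have key : ∀ t : ℝ, 0 < t → ℓ f₀ + t * ℓ h + 1 * α < s₀ := by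
      intro t ht
      have h0 := hA' (f₀ + t • h) 1 (hstrict t ht.le) one_pos
      rw [hℓadd, hℓsmul] at h0
      linarith
    set t := (|s₀ - ℓ f₀ - α| + 1) / ℓ h with htdef
    have ht : 0 < t := div_pos (by positivity) hcon
    have hkey2 := key t ht
    have htl : t * ℓ h = |s₀ - ℓ f₀ - α| + 1 := div_mul_cancel₀ _ (ne_of_gt hcon)
    have habs := le_abs_self (s₀ - ℓ f₀ - α)
    rw [htl] at hkey2
    linarith
  set L : C(X × Y, ℝ) →ₗ[ℝ] ℝ :=
    { toFun := fun f => ℓ f * α⁻¹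
      map_add' := fun f g => by
        show ℓ (f + g) * α⁻¹ = ℓ f * α⁻¹ + ℓ g * α⁻¹
        rw [hℓadd]; ring
      map_smul' := fun t f => by
        show ℓ (t • f) * α⁻¹ = (RingHom.id ℝ) t • (ℓ f * α⁻¹)
        simp only [RingHom.id_apply, smul_eq_mul]
        rw [hℓsmul]; ring } with hLdef
  have hLapp : ∀ f : C(X × Y, ℝ), L f = ℓ f * α⁻¹ := fun f => rfl
  have hLpos : ∀ f : C(X × Y, ℝ), (∀ z, 0 ≤ f z) → 0 ≤ L f := by
    intro f hf
    have h1 : ℓ f ≤ 0 := hpos f hf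
    have h2 : α⁻¹ ≤ 0 := inv_nonpos.mpr hαneg.le
    rw [hLapp]
    nlinarith [mul_nonneg (neg_nonneg.2 h1) (neg_nonneg.2 h2)]
  have hLpl : ∀ (u : C(X, ℝ)) (v : C(Y, ℝ)),
      L (pl u v) = ∫ x, u x ∂μ + ∫ y, v y ∂ν := by
    intro u v
    rw [hLapp, hkey, mul_assoc, mul_inv_cancel₀ (ne_of_lt hαneg), mul_one]
  have hL1 : L 1 = 1 := by
    have h1 : (1 : C(X × Y, ℝ)) = pl 1 0 := by
      ext p
      simp [pl_apply]
    rw [h1, hLpl]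
    have e1 : ∫ x, (1 : C(X, ℝ)) x ∂μ = 1 := by simp
    have e2 : ∫ y, (0 : C(Y, ℝ)) y ∂ν = 0 := by simp
    rw [e1, e2, add_zero]
  have hLc : L cM ≤ S := by
    have hinv : α⁻¹ < 0 := inv_lt_zero.mpr hαneg
    have h1 : s₀ * α⁻¹ ≤ ℓ (-cM) * α⁻¹ := by nlinarith
    have h2 : (-S) * α * α⁻¹ ≤ s₀ * α⁻¹ := by nlinarith
    have h3 : (-S) * α * α⁻¹ = -S := by
      rw [mul_assoc, mul_inv_cancel₀ (ne_of_lt hαneg), mul_one]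
    have h4 : L (-cM) = -(L cM) := map_neg L cM
    have h5 : L (-cM) = ℓ (-cM) * α⁻¹ := rfl
    linarith
  -- the optimal plan
  set γ : Measure (X × Y) := rMeasure L hLpos with hγ
  have hint : ∀ f : C(X × Y, ℝ), ∫ p, f p ∂γ = L f := fun f => integral_rMeasure L hLpos f
  haveI hγprob : IsProbabilityMeasure γ := ⟨rMeasure_univ_eq_one L hLpos hL1⟩
  have hintc : ∫ p, c p ∂γ = L cM := hint cM
  -- marginals
  have hmarg1 : γ.map Prod.fst = μ := by
    apply ext_of_forall_lintegral_eq_of_IsFiniteMeasure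
    intro f
    have hfc : Continuous fun x : X => (f x : ℝ) := NNReal.continuous_coe.comp f.continuous
    set uf : C(X, ℝ) := ⟨fun x => (f x : ℝ), hfc⟩ with huf
    have h1 : ∫⁻ x, (f x : ℝ≥0∞) ∂(γ.map Prod.fst) = ∫⁻ p : X × Y, (f p.1 : ℝ≥0∞) ∂γ :=
      lintegral_map (f.continuous.measurable.coe_nnreal_ennreal) measurable_fst
    have hi1 : Integrable (fun p : X × Y => ((f p.1 : ℝ≥0) : ℝ)) γ :=
      continuous_integrable (hfc.comp continuous_fst)
    have hi2 : Integrable (fun x : X => ((f x : ℝ≥0) : ℝ)) μ := continuous_integrable hfc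
    have h2 : ∫ p : X × Y, ((f p.1 : ℝ≥0) : ℝ) ∂γ = ∫ x, ((f x : ℝ≥0) : ℝ) ∂μ := by
      have e1 : ∫ p : X × Y, ((f p.1 : ℝ≥0) : ℝ) ∂γ = ∫ p, (pl uf 0) p ∂γ := by
        apply integral_congr_ae
        apply Filter.Eventually.of_forall
        intro p
        rw [pl_apply]
        simp [huf]
      rw [e1, hint, hLpl]
      simp [huf]
    rw [h1, lintegral_coe_eq_integral _ hi1, lintegral_coe_eq_integral _ hi2, h2]
  have hmarg2 : γ.map Prod.snd = ν := by
    apply ext_of_forall_lintegral_eq_of_IsFiniteMeasure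
    intro f
    have hfc : Continuous fun y : Y => (f y : ℝ) := NNReal.continuous_coe.comp f.continuous
    set vf : C(Y, ℝ) := ⟨fun y => (f y : ℝ), hfc⟩ with hvf
    have h1 : ∫⁻ y, (f y : ℝ≥0∞) ∂(γ.map Prod.snd) = ∫⁻ p : X × Y, (f p.2 : ℝ≥0∞) ∂γ :=
      lintegral_map (f.continuous.measurable.coe_nnreal_ennreal) measurable_snd
    have hi1 : Integrable (fun p : X × Y => ((f p.2 : ℝ≥0) : ℝ)) γ :=
      continuous_integrable (hfc.comp continuous_snd)
    have hi2 : Integrable (fun y : Y => ((f y : ℝ≥0) : ℝ)) ν := continuous_integrable hfc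
    have h2 : ∫ p : X × Y, ((f p.2 : ℝ≥0) : ℝ) ∂γ = ∫ y, ((f y : ℝ≥0) : ℝ) ∂ν := by
      have e1 : ∫ p : X × Y, ((f p.2 : ℝ≥0) : ℝ) ∂γ = ∫ p, (pl 0 vf) p ∂γ := by
        apply integral_congr_ae
        apply Filter.Eventually.of_forall
        intro p
        rw [pl_apply]
        simp [hvf]
      rw [e1, hint, hLpl]
      simp [hvf]
    rw [h1, lintegral_coe_eq_integral _ hi1, lintegral_coe_eq_integral _ hi2, h2]
  have hS_le : ∀ (γ' : Measure (X × Y)), γ'.map Prod.fst = μ → γ'.map Prod.snd = ν →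
      S ≤ ∫ p, c p ∂γ' := by
    intro γ' h1 h2
    apply csSup_le hne
    rintro r ⟨u, v, hu, hv, hf, rfl⟩
    exact weak_duality hc h1 h2 hu hv hf
  refine ⟨γ, ⟨hmarg1, hmarg2⟩, ?_, ?_⟩
  · intro γ' hγ'
    calc ∫ p, c p ∂γ = L cM := hintc
      _ ≤ S := hLc
      _ ≤ ∫ p, c p ∂γ' := hS_le γ' hγ'.1 hγ'.2
  · refine le_antisymm ?_ (hS_le γ hmarg1 hmarg2)
    calc ∫ p, c p ∂γ = L cM := hintc
      _ ≤ S := hLc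
end
end

section
/- Let X ⊂ ℝ^m and Y ⊂ ℝⁿ be compact convex sets and P ∈ C(X × Y). If for each (x₀,y₀) ∈ X × Y the function x ∈ X ↦ P(x,y₀) is convex and the function y ∈ Y ↦ −P(x₀,y) is convex, then inf_{x ∈ X} sup_{y ∈ Y} P(x,y) = sup_{y ∈ Y} inf_{x ∈ X} P(x,y). -/
open Set

noncomputable section

namespace VNAux

variable {m n : ℕ}

local notation "E" => EuclideanSpace ℝ (Fin m)
local notation "F" => EuclideanSpace ℝ (Fin n)

/-- continuity of a slice in `x`. -/
lemma cont_slice {X : Set (EuclideanSpace ℝ (Fin m))} {Y : Set (EuclideanSpace ℝ (Fin n))}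
    {P : EuclideanSpace ℝ (Fin m) → EuclideanSpace ℝ (Fin n) → ℝ}
    (hP : ContinuousOn (Function.uncurry P) (X ×ˢ Y)) {y : EuclideanSpace ℝ (Fin n)}
    (hy : y ∈ Y) : ContinuousOn (fun x => P x y) X := by
  have : (fun x => P x y) = (Function.uncurry P) ∘ (fun x => (x, y)) := rfl
  rw [this]
  exact hP.comp ((continuous_id.prodMk continuous_const).continuousOn)
    (fun x hx => ⟨hx, hy⟩)

/-- Komiya's Lemma 1. -/
lemma lemma1 {X : Set (EuclideanSpace ℝ (Fin m))} {Y : Set (EuclideanSpace ℝ (Fin n))}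
    {P : EuclideanSpace ℝ (Fin m) → EuclideanSpace ℝ (Fin n) → ℝ}
    (hYconv : Convex ℝ Y)
    (hP : ContinuousOn (Function.uncurry P) (X ×ˢ Y))
    (hPx : ∀ y₀ ∈ Y, ConvexOn ℝ X fun x => P x y₀)
    (hPy : ∀ x₀ ∈ X, ConcaveOn ℝ Y fun y => P x₀ y)
    {K : Set (EuclideanSpace ℝ (Fin m))} (hKc : IsCompact K) (hKconv : Convex ℝ K)
    (hKne : K.Nonempty) (hKX : K ⊆ X)
    {y₁ y₂ : EuclideanSpace ℝ (Fin n)} (hy₁ : y₁ ∈ Y) (hy₂ : y₂ ∈ Y) {α β : ℝ}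
    (hαβ : α < β) (h : ∀ x ∈ K, β < max (P x y₁) (P x y₂)) :
    ∃ y ∈ Y, ∀ x ∈ K, α < P x y := by
  by_contra hcon
  push_neg at hcon
  -- hcon : ∀ y ∈ Y, ∃ x ∈ K, P x y ≤ α
  set seg : Set (EuclideanSpace ℝ (Fin n)) := segment ℝ y₁ y₂ with hseg
  have hsegY : seg ⊆ Y := hYconv.segment_subset hy₁ hy₂
  set B₁ : Set (EuclideanSpace ℝ (Fin m)) := {x ∈ K | P x y₁ ≤ β} with hB₁
  set B₂ : Set (EuclideanSpace ℝ (Fin m)) := {x ∈ K | P x y₂ ≤ β} with hB₂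
  have hKclosed : IsClosed K := hKc.isClosed
  have hBclosed : ∀ (y : EuclideanSpace ℝ (Fin n)), y ∈ Y →
      IsClosed {x ∈ K | P x y ≤ β} := by
    intro y hy
    have : {x ∈ K | P x y ≤ β} = K ∩ (fun x => P x y) ⁻¹' (Iic β) := rfl
    rw [this]
    exact ContinuousOn.preimage_isClosed_of_isClosed
      ((cont_slice hP hy).mono hKX) hKclosed isClosed_Iic
  have hB₁closed : IsClosed B₁ := hBclosed y₁ hy₁
  have hB₂closed : IsClosed B₂ := hBclosed y₂ hy₂
  have hB₁₂ : Disjoint B₁ B₂ := by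
    rw [Set.disjoint_left]
    rintro x ⟨hxK, h1⟩ ⟨-, h2⟩
    exact absurd (max_le h1 h2) (not_le.2 (h x hxK))
  -- key : sublevel sets on the segment are inside B₁ ∪ B₂
  have key : ∀ z ∈ seg, ∀ x ∈ K, P x z ≤ β → x ∈ B₁ ∪ B₂ := by
    intro z hz x hx hle
    have := (hPy x (hKX hx)).ge_on_segment hy₁ hy₂ hz
    rcases min_le_iff.1 this with h' | h'
    · exact Or.inl ⟨hx, h'.trans hle⟩
    · exact Or.inr ⟨hx, h'.trans hle⟩
  -- the partition sets
  set I : Set (EuclideanSpace ℝ (Fin n)) := {z ∈ seg | ∃ x ∈ B₁, P x z ≤ α} with hI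
  set J : Set (EuclideanSpace ℝ (Fin n)) := {z ∈ seg | ∃ x ∈ B₂, P x z ≤ α} with hJ
  have hsegIJ : seg ⊆ I ∪ J := by
    intro z hz
    obtain ⟨x, hxK, hxle⟩ := hcon z (hsegY hz)
    rcases key z hz x hxK (hxle.trans hαβ.le) with hx | hx
    · exact Or.inl ⟨hz, x, hx, hxle⟩
    · exact Or.inr ⟨hz, x, hx, hxle⟩
  have hIJ : I ∩ J = ∅ := by
    rw [Set.eq_empty_iff_forall_notMem]
    rintro z ⟨⟨hzseg, x₁, hx₁B, hx₁le⟩, ⟨-, x₂, hx₂B, hx₂le⟩⟩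
    -- segment [x₁, x₂] is inside the sublevel set {x ∈ K | P x z ≤ β}
    have hzY : z ∈ Y := hsegY hzseg
    have hconv : Convex ℝ {x ∈ K | P x z ≤ β} :=
      ((hPx z hzY).subset hKX hKconv).convex_le β
    have hsub : segment ℝ x₁ x₂ ⊆ {x ∈ K | P x z ≤ β} :=
      hconv.segment_subset ⟨hx₁B.1, hx₁le.trans hαβ.le⟩ ⟨hx₂B.1, hx₂le.trans hαβ.le⟩
    have hpc : IsPreconnected (segment ℝ x₁ x₂) := (convex_segment x₁ x₂).isPreconnected
    have hcover : segment ℝ x₁ x₂ ⊆ B₂ᶜ ∪ B₁ᶜ := by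
      intro x hx
      rcases key z hzseg x (hsub hx).1 (hsub hx).2 with hxB | hxB
      · exact Or.inl (Set.disjoint_left.1 hB₁₂ hxB)
      · exact Or.inr (Set.disjoint_left.1 (hB₁₂.symm) hxB)
    have h1 : (segment ℝ x₁ x₂ ∩ B₂ᶜ).Nonempty :=
      ⟨x₁, left_mem_segment ℝ x₁ x₂, Set.disjoint_left.1 hB₁₂ hx₁B⟩
    have h2 : (segment ℝ x₁ x₂ ∩ B₁ᶜ).Nonempty :=
      ⟨x₂, right_mem_segment ℝ x₁ x₂, Set.disjoint_left.1 hB₁₂.symm hx₂B⟩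
    obtain ⟨x, hxseg, hx1, hx2⟩ :=
      hpc B₂ᶜ B₁ᶜ hB₂closed.isOpen_compl hB₁closed.isOpen_compl hcover h1 h2
    rcases key z hzseg x (hsub hxseg).1 (hsub hxseg).2 with hxB | hxB
    · exact hx2 hxB
    · exact hx1 hxB
  -- I and J are closed: images of compact sets
  have hsegc : IsCompact seg := by
    rw [hseg, segment_eq_image]
    exact isCompact_Icc.image (by continuity)
  have hclosedIJ : ∀ (B : Set (EuclideanSpace ℝ (Fin m))), B ⊆ K →
      IsClosed B → IsClosed {z ∈ seg | ∃ x ∈ B, P x z ≤ α} := by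
    intro B hBK hBcl
    have hBc : IsCompact B := hKc.of_isClosed_subset hBcl hBK
    have hS : IsCompact ((B ×ˢ seg) ∩ (Function.uncurry P) ⁻¹' (Iic α)) := by
      refine (hBc.prod hsegc).of_isClosed_subset ?_ Set.inter_subset_left
      exact ContinuousOn.preimage_isClosed_of_isClosed
        (hP.mono (Set.prod_mono (hBK.trans hKX) hsegY))
        ((hBcl.prod hsegc.isClosed)) isClosed_Iic
    have himg : {z ∈ seg | ∃ x ∈ B, P x z ≤ α}
        = Prod.snd '' ((B ×ˢ seg) ∩ (Function.uncurry P) ⁻¹' (Iic α)) := by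
      ext z
      constructor
      · rintro ⟨hzseg, x, hxB, hle⟩
        exact ⟨(x, z), ⟨⟨hxB, hzseg⟩, hle⟩, rfl⟩
      · rintro ⟨⟨x, z'⟩, ⟨⟨hxB, hzseg⟩, hle⟩, rfl⟩
        exact ⟨hzseg, x, hxB, hle⟩
    rw [himg]
    exact (hS.image continuous_snd).isClosed
  have hIclosed : IsClosed I := hclosedIJ B₁ (fun x hx => hx.1) hB₁closed
  have hJclosed : IsClosed J := hclosedIJ B₂ (fun x hx => hx.1) hB₂closed
  -- y₁ ∈ I, y₂ ∈ J
  have hy₁I : y₁ ∈ I := by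
    obtain ⟨x, hxK, hxle⟩ := hcon y₁ hy₁
    exact ⟨left_mem_segment ℝ y₁ y₂, x, ⟨hxK, hxle.trans hαβ.le⟩, hxle⟩
  have hy₂J : y₂ ∈ J := by
    obtain ⟨x, hxK, hxle⟩ := hcon y₂ hy₂
    exact ⟨right_mem_segment ℝ y₁ y₂, x, ⟨hxK, hxle.trans hαβ.le⟩, hxle⟩
  -- connectedness contradiction
  have hpc : IsPreconnected seg := (convex_segment y₁ y₂).isPreconnected
  have hcover : seg ⊆ Iᶜ ∪ Jᶜ := by
    intro z hz
    by_contra hzc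
    simp only [Set.mem_union, Set.mem_compl_iff, not_or, not_not] at hzc
    have : z ∈ I ∩ J := ⟨hzc.1, hzc.2⟩
    rw [hIJ] at this
    exact this
  have h1 : (seg ∩ Iᶜ).Nonempty := by
    refine ⟨y₂, hy₂J.1, fun hy => ?_⟩
    have : y₂ ∈ I ∩ J := ⟨hy, hy₂J⟩
    rw [hIJ] at this; exact this
  have h2 : (seg ∩ Jᶜ).Nonempty := by
    refine ⟨y₁, hy₁I.1, fun hy => ?_⟩
    have : y₁ ∈ I ∩ J := ⟨hy₁I, hy⟩
    rw [hIJ] at this; exact this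
  obtain ⟨z, hzseg, hzI, hzJ⟩ :=
    hpc Iᶜ Jᶜ hIclosed.isOpen_compl hJclosed.isOpen_compl hcover h1 h2
  rcases hsegIJ hzseg with hz | hz
  · exact hzI hz
  · exact hzJ hz



/-- Komiya's Lemma 2: finite families. -/
lemma lemma2 {X : Set (EuclideanSpace ℝ (Fin m))} {Y : Set (EuclideanSpace ℝ (Fin n))}
    {P : EuclideanSpace ℝ (Fin m) → EuclideanSpace ℝ (Fin n) → ℝ}
    (hYconv : Convex ℝ Y)
    (hP : ContinuousOn (Function.uncurry P) (X ×ˢ Y))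
    (hPx : ∀ y₀ ∈ Y, ConvexOn ℝ X fun x => P x y₀)
    (hPy : ∀ x₀ ∈ X, ConcaveOn ℝ Y fun y => P x₀ y)
    (l : List (EuclideanSpace ℝ (Fin n))) (hl : ∀ y ∈ l, y ∈ Y) :
    ∀ (K : Set (EuclideanSpace ℝ (Fin m))), IsCompact K → Convex ℝ K → K.Nonempty → K ⊆ X →
    ∀ α β : ℝ, α < β → (∀ x ∈ K, ∃ y ∈ l, β < P x y) →
    ∃ y ∈ Y, ∀ x ∈ K, α < P x y := by
  induction l with
  | nil =>
    intro K _ _ hKne _ α β _ h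
    obtain ⟨x, hx⟩ := hKne
    obtain ⟨y, hy, -⟩ := h x hx
    simp at hy
  | cons y₀ l ih =>
    intro K hKc hKconv hKne hKX α β hαβ h
    have hy₀Y : y₀ ∈ Y := hl y₀ (List.mem_cons_self)
    have hlY : ∀ y ∈ l, y ∈ Y := fun y hy => hl y (List.mem_cons_of_mem _ hy)
    set K' : Set (EuclideanSpace ℝ (Fin m)) := {x ∈ K | P x y₀ ≤ β} with hK'
    by_cases hK'ne : K'.Nonempty
    · -- K' is compact, convex, ⊆ X
      have hK'closed : IsClosed K' := by
        have : K' = K ∩ (fun x => P x y₀) ⁻¹' (Iic β) := rfl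
        rw [this]
        exact ContinuousOn.preimage_isClosed_of_isClosed
          ((cont_slice hP hy₀Y).mono hKX) hKc.isClosed isClosed_Iic
      have hK'c : IsCompact K' := hKc.of_isClosed_subset hK'closed (fun x hx => hx.1)
      have hK'conv : Convex ℝ K' := ((hPx y₀ hy₀Y).subset hKX hKconv).convex_le β
      have hK'X : K' ⊆ X := fun x hx => hKX hx.1
      set γ : ℝ := (α + β) / 2 with hγ
      have hαγ : α < γ := by rw [hγ]; linarith
      have hγβ : γ < β := by rw [hγ]; linarith
      have h' : ∀ x ∈ K', ∃ y ∈ l, β < P x y := by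
        rintro x ⟨hxK, hxle⟩
        obtain ⟨y, hy, hlt⟩ := h x hxK
        rcases List.mem_cons.1 hy with rfl | hy
        · exact absurd hxle (not_le.2 hlt)
        · exact ⟨y, hy, hlt⟩
      obtain ⟨y', hy'Y, hy'⟩ := ih hlY K' hK'c hK'conv hK'ne hK'X γ β hγβ h'
      refine lemma1 hYconv hP hPx hPy hKc hKconv hKne hKX hy'Y hy₀Y hαγ ?_
      intro x hx
      by_cases hxK' : x ∈ K'
      · exact lt_max_iff.2 (Or.inl (hy' x hxK'))
      · have : ¬ P x y₀ ≤ β := fun hle => hxK' ⟨hx, hle⟩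
        exact lt_max_iff.2 (Or.inr (hγβ.trans (not_le.1 this)))
    · refine ⟨y₀, hy₀Y, fun x hx => ?_⟩
      have : ¬ P x y₀ ≤ β := fun hle => hK'ne ⟨x, hx, hle⟩
      exact hαβ.trans (not_le.1 this)

end VNAux

open VNAux in
/-- **Von Neumann's convex/concave min-max theorem.**  If `X ⊆ ℝᵐ` and `Y ⊆ ℝⁿ` are
nonempty compact convex sets and `P` is a continuous payoff function on `X × Y` which is
convex in `x` for each fixed `y₀ ∈ Y` and concave in `y` for each fixed `x₀ ∈ X`, then
`inf_{x ∈ X} sup_{y ∈ Y} P(x,y) = sup_{y ∈ Y} inf_{x ∈ X} P(x,y)`. -/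
theorem vonNeumann_minimax {m n : ℕ}
    (X : Set (EuclideanSpace ℝ (Fin m))) (Y : Set (EuclideanSpace ℝ (Fin n)))
    (hXc : IsCompact X) (hXconv : Convex ℝ X) (hXne : X.Nonempty)
    (hYc : IsCompact Y) (hYconv : Convex ℝ Y) (hYne : Y.Nonempty)
    (P : EuclideanSpace ℝ (Fin m) → EuclideanSpace ℝ (Fin n) → ℝ)
    (hP : ContinuousOn (Function.uncurry P) (X ×ˢ Y))
    (hPx : ∀ y₀ ∈ Y, ConvexOn ℝ X fun x => P x y₀)
    (hPy : ∀ x₀ ∈ X, ConcaveOn ℝ Y fun y => P x₀ y) :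
    sInf ((fun x => sSup ((fun y => P x y) '' Y)) '' X) =
      sSup ((fun y => sInf ((fun x => P x y) '' X)) '' Y) := by
  classical
  set f : EuclideanSpace ℝ (Fin m) → ℝ := fun x => sSup ((fun y => P x y) '' Y) with hf
  set g : EuclideanSpace ℝ (Fin n) → ℝ := fun y => sInf ((fun x => P x y) '' X) with hg
  obtain ⟨C, hC⟩ := (hXc.prod hYc).exists_bound_of_continuousOn hP
  have hbound : ∀ x ∈ X, ∀ y ∈ Y, -C ≤ P x y ∧ P x y ≤ C := by
    intro x hx y hy
    have := hC (x, y) ⟨hx, hy⟩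
    rw [Real.norm_eq_abs, abs_le] at this
    exact this
  -- basic facts on f
  have hfge : ∀ x ∈ X, ∀ y ∈ Y, P x y ≤ f x := by
    intro x hx y hy
    refine le_csSup ⟨C, ?_⟩ ⟨y, hy, rfl⟩
    rintro r ⟨y', hy', rfl⟩
    exact (hbound x hx y' hy').2
  have hfle : ∀ x ∈ X, ∀ r : ℝ, (∀ y ∈ Y, P x y ≤ r) → f x ≤ r := by
    intro x hx r hr
    refine csSup_le (hYne.image _) ?_
    rintro s ⟨y, hy, rfl⟩
    exact hr y hy
  -- basic facts on g
  have hgle : ∀ y ∈ Y, ∀ x ∈ X, g y ≤ P x y := by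
    intro y hy x hx
    refine csInf_le ⟨-C, ?_⟩ ⟨x, hx, rfl⟩
    rintro r ⟨x', hx', rfl⟩
    exact (hbound x' hx' y hy).1
  have hgge : ∀ y ∈ Y, ∀ r : ℝ, (∀ x ∈ X, r ≤ P x y) → r ≤ g y := by
    intro y hy r hr
    refine le_csInf (hXne.image _) ?_
    rintro s ⟨x, hx, rfl⟩
    exact hr x hx
  have hfX_bddBelow : BddBelow (f '' X) := by
    refine ⟨-C, ?_⟩
    rintro r ⟨x, hx, rfl⟩
    obtain ⟨y, hy⟩ := hYne
    exact (hbound x hx y hy).1.trans (hfge x hx y hy)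
  have hgY_bddAbove : BddAbove (g '' Y) := by
    refine ⟨C, ?_⟩
    rintro r ⟨y, hy, rfl⟩
    obtain ⟨x, hx⟩ := hXne
    exact (hgle y hy x hx).trans (hbound x hx y hy).2
  -- easy inequality
  have easy : sSup (g '' Y) ≤ sInf (f '' X) := by
    refine csSup_le (hYne.image _) ?_
    rintro s ⟨y, hy, rfl⟩
    refine le_csInf (hXne.image _) ?_
    rintro r ⟨x, hx, rfl⟩
    exact (hgle y hy x hx).trans (hfge x hx y hy)
  -- hard inequality
  have hard : sInf (f '' X) ≤ sSup (g '' Y) := by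
    by_contra hlt
    push_neg at hlt
    set cs : ℝ := sSup (g '' Y) with hcs
    set ci : ℝ := sInf (f '' X) with hci
    set α : ℝ := cs + (ci - cs) / 3 with hα
    set β : ℝ := cs + 2 * (ci - cs) / 3 with hβ
    have hcsα : cs < α := by rw [hα]; linarith
    have hαβ : α < β := by rw [hα, hβ]; linarith
    have hβci : β < ci := by rw [hβ]; linarith
    -- closed family indexed by Y
    set t : Y → Set (EuclideanSpace ℝ (Fin m)) :=
      fun y => X ∩ (fun x => P x (y : EuclideanSpace ℝ (Fin n))) ⁻¹' (Iic β) with ht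
    have htclosed : ∀ y : Y, IsClosed (t y) := by
      intro y
      exact ContinuousOn.preimage_isClosed_of_isClosed
        (cont_slice hP y.2) hXc.isClosed isClosed_Iic
    have hempty : (X ∩ ⋂ y : Y, t y) = ∅ := by
      rw [Set.eq_empty_iff_forall_notMem]
      rintro x ⟨hxX, hxI⟩
      rw [Set.mem_iInter] at hxI
      have : f x ≤ β := hfle x hxX β (fun y hy => (hxI ⟨y, hy⟩).2)
      have hcif : ci ≤ f x := csInf_le hfX_bddBelow ⟨x, hxX, rfl⟩
      linarith
    obtain ⟨u, hu⟩ := hXc.elim_finite_subfamily_closed t htclosed hempty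
    set l : List (EuclideanSpace ℝ (Fin n)) := u.toList.map Subtype.val with hlist
    have hlY : ∀ y ∈ l, y ∈ Y := by
      intro y hy
      rw [hlist, List.mem_map] at hy
      obtain ⟨⟨y', hy'⟩, -, rfl⟩ := hy
      exact hy'
    have hfinite : ∀ x ∈ X, ∃ y ∈ l, β < P x y := by
      intro x hx
      have hnot : x ∉ ⋂ y ∈ u, t y := by
        intro hmem
        exact (Set.eq_empty_iff_forall_notMem.1 hu x) ⟨hx, hmem⟩
      rw [Set.mem_iInter₂] at hnot
      push_neg at hnot
      obtain ⟨y, hyu, hyt⟩ := hnot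
      refine ⟨(y : EuclideanSpace ℝ (Fin n)), ?_, ?_⟩
      · rw [hlist, List.mem_map]
        exact ⟨y, Finset.mem_toList.2 hyu, rfl⟩
      · by_contra hle
        exact hyt ⟨hx, not_lt.1 hle⟩
    obtain ⟨y₀, hy₀Y, hy₀⟩ :=
      lemma2 hYconv hP hPx hPy l hlY X hXc hXconv hXne (subset_refl X) α β hαβ hfinite
    have : α ≤ g y₀ := hgge y₀ hy₀Y α (fun x hx => (hy₀ x hx).le)
    have : g y₀ ≤ cs := le_csSup hgY_bddAbove ⟨y₀, hy₀Y, rfl⟩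
    have : α ≤ cs := le_trans (hgge y₀ hy₀Y α (fun x hx => (hy₀ x hx).le)) this
    linarith
  linarith [easy, hard]
end
end

section
/- Let M⁺ and M⁻ be n-dimensional manifolds, at least in a neighbourhood U of a point (x₀,y₀) ∈ M⁺ × M⁻, and suppose c ∈ C²(U) satisfies the non-degeneracy condition (A2): det D²_{x^i y^j} c(x₀,y₀) ≠ 0. If S ⊂ M⁺ × M⁻ is c-cyclically monotone, then there is a neighbourhood V ⊂ U of (x₀,y₀) such that S ∩ V is contained in an n-dimensional Lipschitz submanifold of M⁺ × M⁻. -/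
open Set
open scoped NNReal

noncomputable section

/-- `ℝⁿ`, coordinates for the `n`-dimensional manifolds `M⁺` and `M⁻`. -/
abbrev E (n : ℕ) := EuclideanSpace ℝ (Fin n)

/-- `S` is `c`-cyclically monotone. -/
def CCyclicallyMonotone {X Y : Type*} (c : X × Y → ℝ) (S : Set (X × Y)) : Prop :=
  ∀ (k : ℕ) (p : Fin k → X × Y), (∀ i, p i ∈ S) → ∀ σ : Equiv.Perm (Fin k),
    ∑ i, c (p i) ≤ ∑ i, c ((p i).1, (p (σ i)).2)

/-- The matrix of mixed second partials `D²_{xⁱ yʲ} c` at `(x₀,y₀)`. -/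
def mixedHessian {n : ℕ} (c : E n × E n → ℝ) (x₀ y₀ : E n) : Matrix (Fin n) (Fin n) ℝ :=
  Matrix.of fun i j =>
    fderiv ℝ (fun y' => fderiv ℝ (fun x' => c (x', y')) x₀ (EuclideanSpace.single i 1)) y₀
      (EuclideanSpace.single j 1)


open scoped RealInnerProductSpace

namespace RectAux

variable {n : ℕ}

lemma mixedHessian_eq (c : E n × E n → ℝ) (x₀ y₀ : E n) (U : Set (E n × E n))
    (hUopen : IsOpen U) (hmem : (x₀, y₀) ∈ U)
    (hdc : DifferentiableOn ℝ c U) (hdf' : DifferentiableOn ℝ (fderiv ℝ c) U) (i j : Fin n) :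
    mixedHessian c x₀ y₀ i j =
      fderiv ℝ (fderiv ℝ c) (x₀, y₀) (0, EuclideanSpace.single j 1)
        (EuclideanSpace.single i 1, 0) := by
  have hyU : ∀ᶠ y' in nhds y₀, (x₀, y') ∈ U := by
    have hcont : ContinuousAt (fun y : E n => ((x₀ : E n), y)) y₀ :=
      (continuous_const.prodMk continuous_id).continuousAt
    exact hcont.preimage_mem_nhds (hUopen.mem_nhds hmem)
  have key : ∀ y', (x₀, y') ∈ U →
      fderiv ℝ (fun x' => c (x', y')) x₀ (EuclideanSpace.single i 1) =
        fderiv ℝ c (x₀, y') (EuclideanSpace.single i 1, 0) := by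
    intro y' hy'
    have h1 : HasFDerivAt (fun x' : E n => c (x', y'))
        ((fderiv ℝ c (x₀, y')).comp (ContinuousLinearMap.inl ℝ (E n) (E n))) x₀ :=
      ((hdc.differentiableAt (hUopen.mem_nhds hy')).hasFDerivAt).comp x₀
        (hasFDerivAt_prodMk_left x₀ y')
    rw [h1.fderiv]; rfl
  have hev : (fun y' => fderiv ℝ (fun x' => c (x', y')) x₀ (EuclideanSpace.single i 1)) =ᶠ[nhds y₀]
      (fun y' => fderiv ℝ c (x₀, y') (EuclideanSpace.single i 1, 0)) :=
    hyU.mono key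
  have h2 : HasFDerivAt (fun y' => fderiv ℝ c (x₀, y'))
      ((fderiv ℝ (fderiv ℝ c) (x₀, y₀)).comp (ContinuousLinearMap.inr ℝ (E n) (E n))) y₀ :=
    ((hdf'.differentiableAt (hUopen.mem_nhds hmem)).hasFDerivAt).comp y₀
      (hasFDerivAt_prodMk_right x₀ y₀)
  have h3 : HasFDerivAt (fun y' => fderiv ℝ c (x₀, y') (EuclideanSpace.single i 1, 0))
      ((ContinuousLinearMap.apply ℝ ℝ ((EuclideanSpace.single i 1 : E n), (0 : E n))).comp
        ((fderiv ℝ (fderiv ℝ c) (x₀, y₀)).comp (ContinuousLinearMap.inr ℝ (E n) (E n)))) y₀ :=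
    ((ContinuousLinearMap.apply ℝ ℝ ((EuclideanSpace.single i 1 : E n),
      (0 : E n))).hasFDerivAt).comp y₀ h2
  have : mixedHessian c x₀ y₀ i j =
      fderiv ℝ (fun y' => fderiv ℝ (fun x' => c (x', y')) x₀ (EuclideanSpace.single i 1)) y₀
        (EuclideanSpace.single j 1) := rfl
  rw [this, hev.fderiv_eq, h3.fderiv]
  rfl


lemma euclid_sum (y : E n) : y = ∑ j, y j • (EuclideanSpace.single j 1 : E n) := by
  have := (EuclideanSpace.basisFun (Fin n) ℝ).sum_repr y
  simp only [EuclideanSpace.basisFun_repr, EuclideanSpace.basisFun_apply] at this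
  exact this.symm

example (x w : E n) : ⟪x, w⟫ = ∑ i, x i * w i := by
  simp [PiLp.inner_apply, RCLike.inner_apply, mul_comm]

lemma bilin_eq (B : (E n × E n) →L[ℝ] (E n × E n) →L[ℝ] ℝ) (M : Matrix (Fin n) (Fin n) ℝ)
    (hM : ∀ i j, M i j = B (0, EuclideanSpace.single j 1) (EuclideanSpace.single i 1, 0))
    (x y : E n) :
    B (0, y) (x, 0) = ⟪x, Matrix.toEuclideanLin M y⟫ := by
  have hy : ((0 : E n), y) = ∑ j, y j • ((0 : E n), (EuclideanSpace.single j 1 : E n)) := by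
    have := euclid_sum y
    refine Prod.ext ?_ ?_
    · simp [Prod.fst_sum]
    · simpa [Prod.snd_sum] using this
  have hx : ∀ j : Fin n, ((x : E n), (0:E n)) = ∑ i, x i • ((EuclideanSpace.single i 1 : E n), (0 : E n)) := by
    intro j
    have := euclid_sum x
    refine Prod.ext ?_ ?_
    · simpa [Prod.fst_sum] using this
    · simp [Prod.snd_sum]
  have lhs : B (0, y) (x, 0) = ∑ j, y j * ∑ i, x i * M i j := by
    rw [hy]
    rw [map_sum]
    rw [ContinuousLinearMap.sum_apply]
    refine Finset.sum_congr rfl fun j _ => ?_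
    rw [map_smul, ContinuousLinearMap.smul_apply, smul_eq_mul]
    congr 1
    rw [hx j, map_sum]
    refine Finset.sum_congr rfl fun i _ => ?_
    rw [map_smul, smul_eq_mul, hM i j]
  have rhs : ⟪x, Matrix.toEuclideanLin M y⟫ = ∑ i, x i * ∑ j, M i j * y j := by
    simp [PiLp.inner_apply, RCLike.inner_apply, Matrix.toEuclideanLin_apply, Matrix.mulVec,
      dotProduct, mul_comm]
  rw [lhs, rhs]
  simp only [Finset.mul_sum]
  rw [Finset.sum_comm]
  refine Finset.sum_congr rfl fun i _ => Finset.sum_congr rfl fun j _ => by ring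

lemma exists_cle (M : Matrix (Fin n) (Fin n) ℝ) (hM : M.det ≠ 0) :
    ∃ Nc : E n ≃L[ℝ] E n, ∀ y, Nc y = Matrix.toEuclideanLin M y := by
  have hu : IsUnit M.det := isUnit_iff_ne_zero.2 hM
  have hcomp : ∀ A B : Matrix (Fin n) (Fin n) ℝ,
      (Matrix.toEuclideanLin A) ∘ₗ (Matrix.toEuclideanLin B) = Matrix.toEuclideanLin (A * B) := by
    intro A B
    apply LinearMap.ext; intro v
    simp [Matrix.toEuclideanLin_apply, Matrix.mulVec_mulVec]
  have hone : Matrix.toEuclideanLin (1 : Matrix (Fin n) (Fin n) ℝ) = LinearMap.id := by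
    apply LinearMap.ext; intro v
    simp [Matrix.toEuclideanLin_apply]
  let e : E n ≃ₗ[ℝ] E n :=
    LinearEquiv.ofLinear (Matrix.toEuclideanLin M) (Matrix.toEuclideanLin M⁻¹)
      (by rw [hcomp, Matrix.mul_nonsing_inv M hu, hone])
      (by rw [hcomp, Matrix.nonsing_inv_mul M hu, hone])
  exact ⟨e.toContinuousLinearEquiv, fun y => rfl⟩

set_option maxHeartbeats 1000000 in
lemma cross_estimate (c : E n × E n → ℝ) (U : Set (E n × E n)) (hUopen : IsOpen U)
    (hdc : DifferentiableOn ℝ c U) (hdf' : DifferentiableOn ℝ (fderiv ℝ c) U)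
    (x₀ y₀ : E n) (r ε : ℝ)
    (hball : Metric.ball x₀ r ×ˢ Metric.ball y₀ r ⊆ U)
    (hbound : ∀ p ∈ Metric.ball x₀ r ×ˢ Metric.ball y₀ r,
      ‖fderiv ℝ (fderiv ℝ c) p - fderiv ℝ (fderiv ℝ c) (x₀, y₀)‖ ≤ ε)
    {x₁ x₂ y₁ y₂ : E n} (hx₁ : x₁ ∈ Metric.ball x₀ r) (hx₂ : x₂ ∈ Metric.ball x₀ r)
    (hy₁ : y₁ ∈ Metric.ball y₀ r) (hy₂ : y₂ ∈ Metric.ball y₀ r) :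
    |c (x₁, y₁) - c (x₁, y₂) - c (x₂, y₁) + c (x₂, y₂)
      - fderiv ℝ (fderiv ℝ c) (x₀, y₀) (0, y₁ - y₂) (x₁ - x₂, 0)|
      ≤ ε * ‖y₁ - y₂‖ * ‖x₁ - x₂‖ := by
  set B := fderiv ℝ (fderiv ℝ c) with hB
  set B₀ := fderiv ℝ (fderiv ℝ c) (x₀, y₀) with hB₀
  set f' := fderiv ℝ c with hf'
  set inlE := ContinuousLinearMap.inl ℝ (E n) (E n) with hinlE
  set inrE := ContinuousLinearMap.inr ℝ (E n) (E n) with hinrE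
  set P : ((E n × E n) →L[ℝ] ℝ) →L[ℝ] (E n →L[ℝ] ℝ) :=
    (ContinuousLinearMap.compL ℝ (E n) (E n × E n) ℝ).flip inlE with hP
  have hPapp : ∀ L : (E n × E n) →L[ℝ] ℝ, P L = L.comp inlE := fun _ => rfl
  have hinl_norm : ‖inlE‖ ≤ 1 := by
    refine ContinuousLinearMap.opNorm_le_bound _ zero_le_one fun x => ?_
    have : ‖inlE x‖ = ‖x‖ := by
      simp [hinlE, Prod.norm_def]
    rw [this, one_mul]
  have hinr_norm : ‖inrE‖ ≤ 1 := by
    refine ContinuousLinearMap.opNorm_le_bound _ zero_le_one fun x => ?_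
    have : ‖inrE x‖ = ‖x‖ := by
      simp [hinrE, Prod.norm_def]
    rw [this, one_mul]
  have hPnorm : ‖P‖ ≤ 1 := by
    refine ContinuousLinearMap.opNorm_le_bound _ zero_le_one fun L => ?_
    rw [hPapp, one_mul]
    calc ‖L.comp inlE‖ ≤ ‖L‖ * ‖inlE‖ := ContinuousLinearMap.opNorm_comp_le _ _
      _ ≤ ‖L‖ * 1 := by gcongr
      _ = ‖L‖ := mul_one _
  -- the inner mean value estimate
  have inner_mvt : ∀ x ∈ Metric.ball x₀ r,
      ‖(P (f' (x, y₁)) - P (B₀ (inrE y₁))) - (P (f' (x, y₂)) - P (B₀ (inrE y₂)))‖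
        ≤ ε * ‖y₁ - y₂‖ := by
    intro x hx
    set ψ : E n → (E n →L[ℝ] ℝ) := fun y => P (f' (x, y)) - P (B₀ (inrE y)) with hψ
    have hder : ∀ y ∈ Metric.ball y₀ r, HasFDerivWithinAt ψ
        (P.comp ((B (x, y)).comp inrE) - P.comp (B₀.comp inrE)) (Metric.ball y₀ r) y := by
      intro y hy
      have hmem : (x, y) ∈ U := hball ⟨hx, hy⟩
      have h2 : HasFDerivAt (fun y' => f' (x, y')) ((B (x, y)).comp inrE) y :=
        ((hdf'.differentiableAt (hUopen.mem_nhds hmem)).hasFDerivAt).comp y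
          (hasFDerivAt_prodMk_right x y)
      have h3 : HasFDerivAt (fun y' => P (f' (x, y'))) (P.comp ((B (x, y)).comp inrE)) y :=
        (P.hasFDerivAt).comp y h2
      have h4 : HasFDerivAt (fun y' => P (B₀ (inrE y'))) (P.comp (B₀.comp inrE)) y :=
        (P.comp (B₀.comp inrE)).hasFDerivAt
      exact (h3.sub h4).hasFDerivWithinAt
    have hnorm : ∀ y ∈ Metric.ball y₀ r,
        ‖P.comp ((B (x, y)).comp inrE) - P.comp (B₀.comp inrE)‖ ≤ ε := by
      intro y hy
      have heq : P.comp ((B (x, y)).comp inrE) - P.comp (B₀.comp inrE)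
          = P.comp ((B (x, y) - B₀).comp inrE) := by
        rw [ContinuousLinearMap.sub_comp, ContinuousLinearMap.comp_sub]
      rw [heq]
      have hε0 : (0:ℝ) ≤ ε := le_trans (norm_nonneg (B (x, y) - B₀)) (hbound (x, y) ⟨hx, hy⟩)
      calc ‖P.comp ((B (x, y) - B₀).comp inrE)‖
          ≤ ‖P‖ * ‖(B (x, y) - B₀).comp inrE‖ := ContinuousLinearMap.opNorm_comp_le _ _
        _ ≤ 1 * (ε * 1) := by
            refine mul_le_mul hPnorm ?_ (norm_nonneg ((B (x, y) - B₀).comp inrE)) zero_le_one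
            refine le_trans (ContinuousLinearMap.opNorm_comp_le _ _) ?_
            exact mul_le_mul (hbound (x, y) ⟨hx, hy⟩) hinr_norm (norm_nonneg inrE) hε0
        _ = ε := by ring
    have := (convex_ball y₀ r).norm_image_sub_le_of_norm_hasFDerivWithin_le
      hder hnorm hy₂ hy₁
    simpa [hψ] using this
  -- the outer mean value estimate
  set φ : E n → ℝ := fun x => c (x, y₁) - c (x, y₂) - B₀ ((0 : E n), y₁ - y₂) (x, 0) with hφ
  have hφder : ∀ x ∈ Metric.ball x₀ r, HasFDerivWithinAt φ
      ((P (f' (x, y₁)) - P (B₀ (inrE y₁))) - (P (f' (x, y₂)) - P (B₀ (inrE y₂))))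
      (Metric.ball x₀ r) x := by
    intro x hx
    have hm1 : (x, y₁) ∈ U := hball ⟨hx, hy₁⟩
    have hm2 : (x, y₂) ∈ U := hball ⟨hx, hy₂⟩
    have h1 : HasFDerivAt (fun x' : E n => c (x', y₁)) (P (f' (x, y₁))) x :=
      ((hdc.differentiableAt (hUopen.mem_nhds hm1)).hasFDerivAt).comp x
        (hasFDerivAt_prodMk_left x y₁)
    have h2 : HasFDerivAt (fun x' : E n => c (x', y₂)) (P (f' (x, y₂))) x :=
      ((hdc.differentiableAt (hUopen.mem_nhds hm2)).hasFDerivAt).comp x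
        (hasFDerivAt_prodMk_left x y₂)
    have h3 : HasFDerivAt (fun x' : E n => B₀ ((0 : E n), y₁ - y₂) (x', 0))
        (P (B₀ (inrE (y₁ - y₂)))) x := by
      have hfun : (fun x' : E n => B₀ ((0 : E n), y₁ - y₂) (x', 0))
          = ⇑(P (B₀ (inrE (y₁ - y₂)))) := by
        funext x'; rfl
      rw [hfun]
      exact (P (B₀ (inrE (y₁ - y₂)))).hasFDerivAt
    have hsum := (h1.sub h2).sub h3
    have heq : P (f' (x, y₁)) - P (f' (x, y₂)) - P (B₀ (inrE (y₁ - y₂)))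
        = (P (f' (x, y₁)) - P (B₀ (inrE y₁))) - (P (f' (x, y₂)) - P (B₀ (inrE y₂))) := by
      have : P (B₀ (inrE (y₁ - y₂))) = P (B₀ (inrE y₁)) - P (B₀ (inrE y₂)) := by
        rw [← map_sub, ← map_sub, ← map_sub]
      rw [this]; abel
    rw [← heq]
    exact hsum.hasFDerivWithinAt
  have hφnorm : ∀ x ∈ Metric.ball x₀ r,
      ‖(P (f' (x, y₁)) - P (B₀ (inrE y₁))) - (P (f' (x, y₂)) - P (B₀ (inrE y₂)))‖
        ≤ ε * ‖y₁ - y₂‖ := inner_mvt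
  have hmvt := (convex_ball x₀ r).norm_image_sub_le_of_norm_hasFDerivWithin_le
    hφder hφnorm hx₂ hx₁
  have hfinal : c (x₁, y₁) - c (x₁, y₂) - c (x₂, y₁) + c (x₂, y₂)
      - B₀ ((0 : E n), y₁ - y₂) (x₁ - x₂, 0) = φ x₁ - φ x₂ := by
    have hsub : B₀ ((0 : E n), y₁ - y₂) (x₁ - x₂, (0 : E n))
        = B₀ ((0 : E n), y₁ - y₂) (x₁, 0) - B₀ ((0 : E n), y₁ - y₂) (x₂, 0) := by
      rw [← map_sub]
      congr 1
      rw [Prod.mk_sub_mk, sub_zero]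
    rw [hφ]; beta_reduce; rw [hsub]; ring
  rw [hfinal]
  calc |φ x₁ - φ x₂| = ‖φ x₁ - φ x₂‖ := rfl
    _ ≤ ε * ‖y₁ - y₂‖ * ‖x₁ - x₂‖ := hmvt

lemma key_ineq (a b : E n) (h : ⟪a, b⟫ ≤ (1/4) * (‖a‖^2 + ‖b‖^2)) :
    ‖a + b‖ ≤ 2 * ‖a - b‖ := by
  have h1 : ‖a + b‖^2 = ‖a‖^2 + 2*⟪a,b⟫ + ‖b‖^2 := norm_add_sq_real a b
  have h2 : ‖a - b‖^2 = ‖a‖^2 - 2*⟪a,b⟫ + ‖b‖^2 := norm_sub_sq_real a b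
  nlinarith [norm_nonneg (a+b), norm_nonneg (a-b), sq_nonneg (‖a+b‖ - 2*‖a-b‖),
    sq_nonneg (‖a+b‖ + 2*‖a-b‖)]

end RectAux

section Main

variable {n : ℕ}

set_option maxHeartbeats 1600000 in
theorem rectifiability_of_optimal_transport' 
    (c : E n × E n → ℝ) (x₀ y₀ : E n) (U : Set (E n × E n))
    (hU : U ∈ nhds (x₀, y₀)) (hUopen : IsOpen U)
    (hc : ContDiffOn ℝ 2 c U)
    (hA2 : (mixedHessian c x₀ y₀).det ≠ 0)
    (S : Set (E n × E n)) (hS : CCyclicallyMonotone c S) :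
    ∃ V ∈ nhds (x₀, y₀), V ⊆ U ∧
      ∃ (L : (E n × E n) ≃L[ℝ] (E n × E n)) (K : ℝ≥0) (f : E n → E n),
        LipschitzWith K f ∧ S ∩ V ⊆ L '' {p : E n × E n | p.2 = f p.1} := by
  classical
  have hp₀ : (x₀, y₀) ∈ U := mem_of_mem_nhds hU
  have hc1 : ContDiffOn ℝ 1 (fderiv ℝ c) U := hc.fderiv_of_isOpen hUopen (by norm_num)
  have hdc : DifferentiableOn ℝ c U := hc.differentiableOn (by norm_num)
  have hdf' : DifferentiableOn ℝ (fderiv ℝ c) U := hc1.differentiableOn (by norm_num)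
  have hcontB : ContinuousOn (fderiv ℝ (fderiv ℝ c)) U :=
    hc1.continuousOn_fderiv_of_isOpen hUopen le_rfl
  set B₀ := fderiv ℝ (fderiv ℝ c) (x₀, y₀) with hB₀def
  obtain ⟨Nc, hNc⟩ := RectAux.exists_cle (mixedHessian c x₀ y₀) hA2
  have hbil : ∀ x y : E n, B₀ (0, y) (x, 0) = ⟪x, Nc y⟫ := by
    intro x y
    rw [hNc]
    exact RectAux.bilin_eq B₀ (mixedHessian c x₀ y₀)
      (fun i j => RectAux.mixedHessian_eq c x₀ y₀ U hUopen hp₀ hdc hdf' i j) x y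
  set CN := ‖(Nc.symm : E n →L[ℝ] E n)‖ with hCNdef
  have hCN0 : 0 ≤ CN := norm_nonneg _
  set ε := 1 / (2 * (CN + 1)) with hεdef
  have hε : 0 < ε := by positivity
  have hεCN : ε * CN ≤ 1 / 2 := by
    have h1 : ε * (CN + 1) = 1 / 2 := by
      field_simp [hεdef]
      have hε2 : ε * (2 * (CN + 1)) = 1 := by
        rw [hεdef]; exact one_div_mul_cancel (by positivity)
      linear_combination hε2
    nlinarith
  -- choose the radius r
  have hctsAt : ContinuousAt (fderiv ℝ (fderiv ℝ c)) (x₀, y₀) :=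
    hcontB.continuousAt (hUopen.mem_nhds hp₀)
  have h1 : ∀ᶠ p in nhds (x₀, y₀), ‖fderiv ℝ (fderiv ℝ c) p - B₀‖ < ε := by
    have := hctsAt (Metric.ball_mem_nhds B₀ hε)
    filter_upwards [this] with p hp
    exact lt_of_eq_of_lt (dist_eq_norm (fderiv ℝ (fderiv ℝ c) p) B₀).symm hp
  have h2 : ∀ᶠ p in nhds (x₀, y₀), p ∈ U := hU
  obtain ⟨r, hr, hrball⟩ := Metric.eventually_nhds_iff_ball.1 (h1.and h2)
  set V : Set (E n × E n) := Metric.ball x₀ r ×ˢ Metric.ball y₀ r with hVdef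
  have hVball : V = Metric.ball (x₀, y₀) r := ball_prod_same x₀ y₀ r
  have hVnhds : V ∈ nhds (x₀, y₀) := by rw [hVball]; exact Metric.ball_mem_nhds _ hr
  have hVU : V ⊆ U := by
    rw [hVball]; intro p hp; exact (hrball p hp).2
  have hbound : ∀ p ∈ V, ‖fderiv ℝ (fderiv ℝ c) p - B₀‖ ≤ ε := by
    intro p hp
    rw [hVball] at hp
    exact (hrball p hp).1.le
  -- two-point monotonicity
  have hmono : ∀ p ∈ S, ∀ q ∈ S, c p + c q ≤ c (p.1, q.2) + c (q.1, p.2) := by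
    intro p hp q hq
    have := hS 2 ![p, q] (by intro i; fin_cases i <;> simpa) (Equiv.swap 0 1)
    simpa [Fin.sum_univ_two, Equiv.swap_apply_left, Equiv.swap_apply_right] using this
  -- the key Lipschitz-type estimate on S ∩ V
  have hkey : ∀ p ∈ S ∩ V, ∀ q ∈ S ∩ V,
      ‖(p.1 + Nc p.2) - (q.1 + Nc q.2)‖ ≤ 2 * ‖(p.1 - Nc p.2) - (q.1 - Nc q.2)‖ := by
    rintro ⟨x₁, y₁⟩ ⟨hpS, hx₁, hy₁⟩ ⟨x₂, y₂⟩ ⟨hqS, hx₂, hy₂⟩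
    have hm : c (x₁, y₁) + c (x₂, y₂) ≤ c (x₁, y₂) + c (x₂, y₁) := hmono _ hpS _ hqS
    have hcross : c (x₁, y₁) - c (x₁, y₂) - c (x₂, y₁) + c (x₂, y₂) ≤ 0 := by linarith
    have hest := RectAux.cross_estimate c U hUopen hdc hdf' x₀ y₀ r ε hVU hbound
      hx₁ hx₂ hy₁ hy₂
    have hBle : B₀ (0, y₁ - y₂) (x₁ - x₂, 0) ≤ ε * ‖y₁ - y₂‖ * ‖x₁ - x₂‖ := by
      have habs := abs_le.1 hest
      linarith [habs.1]
    set a := x₁ - x₂ with hadef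
    set bb := Nc y₁ - Nc y₂ with hbbdef
    have hinner : ⟪a, bb⟫ = B₀ (0, y₁ - y₂) (x₁ - x₂, 0) := by
      rw [hbil (x₁ - x₂) (y₁ - y₂), map_sub]
    have hy' : ‖y₁ - y₂‖ ≤ CN * ‖bb‖ := by
      have h5 : y₁ - y₂ = Nc.symm (Nc (y₁ - y₂)) := (Nc.symm_apply_apply _).symm
      calc ‖y₁ - y₂‖ = ‖Nc.symm (Nc (y₁ - y₂))‖ := by rw [← h5]
        _ ≤ CN * ‖Nc (y₁ - y₂)‖ := (Nc.symm : E n →L[ℝ] E n).le_opNorm _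
        _ = CN * ‖bb‖ := by rw [map_sub]
    have hab : ⟪a, bb⟫ ≤ (1/4) * (‖a‖^2 + ‖bb‖^2) := by
      have c1 : ε * ‖y₁ - y₂‖ ≤ (1/2) * ‖bb‖ := by
        calc ε * ‖y₁ - y₂‖ ≤ ε * (CN * ‖bb‖) := mul_le_mul_of_nonneg_left hy' hε.le
          _ = (ε * CN) * ‖bb‖ := by ring
          _ ≤ (1/2) * ‖bb‖ := mul_le_mul_of_nonneg_right hεCN (norm_nonneg _)
      have c2 : ε * ‖y₁ - y₂‖ * ‖a‖ ≤ (1/2) * ‖bb‖ * ‖a‖ :=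
        mul_le_mul_of_nonneg_right c1 (norm_nonneg _)
      have c3 : (1/2) * ‖bb‖ * ‖a‖ ≤ (1/4) * (‖a‖^2 + ‖bb‖^2) := by
        nlinarith [sq_nonneg (‖a‖ - ‖bb‖)]
      calc ⟪a, bb⟫ = B₀ (0, y₁ - y₂) (x₁ - x₂, 0) := hinner
        _ ≤ ε * ‖y₁ - y₂‖ * ‖x₁ - x₂‖ := hBle
        _ ≤ (1/2) * ‖bb‖ * ‖a‖ := c2
        _ ≤ (1/4) * (‖a‖^2 + ‖bb‖^2) := c3
    have hk := RectAux.key_ineq a bb hab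
    have e1 : (x₁ + Nc y₁) - (x₂ + Nc y₂) = a + bb := by
      rw [hadef, hbbdef]; abel
    have e2 : (x₁ - Nc y₁) - (x₂ - Nc y₂) = a - bb := by
      rw [hadef, hbbdef]; abel
    simpa only [e1, e2] using hk
  -- the graph function on the projected set
  set s : Set (E n) := (fun p : E n × E n => p.1 - Nc p.2) '' (S ∩ V) with hsdef
  set f₀ : E n → E n := fun u =>
    if h : ∃ p : E n × E n, p ∈ S ∩ V ∧ p.1 - Nc p.2 = u then
      h.choose.1 + Nc h.choose.2 else 0 with hf₀def
  have hgraph : ∀ p ∈ S ∩ V, f₀ (p.1 - Nc p.2) = p.1 + Nc p.2 := by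
    intro p hp
    have hex : ∃ q : E n × E n, q ∈ S ∩ V ∧ q.1 - Nc q.2 = p.1 - Nc p.2 := ⟨p, hp, rfl⟩
    rw [hf₀def]
    simp only
    rw [dif_pos hex]
    obtain ⟨hq, hqe⟩ := hex.choose_spec
    have hk := hkey _ hq _ hp
    rw [hqe] at hk
    simp only [sub_self, norm_zero, mul_zero] at hk
    have := norm_le_zero_iff.1 hk
    exact sub_eq_zero.1 this
  have hlip : LipschitzOnWith 2 f₀ s := by
    apply LipschitzOnWith.of_dist_le_mul
    rintro u₁ ⟨p, hp, rfl⟩ u₂ ⟨q, hq, rfl⟩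
    rw [hgraph p hp, hgraph q hq, dist_eq_norm, dist_eq_norm]
    simpa using hkey p hp q hq
  -- extend to a global Lipschitz function
  set eL : E n ≃L[ℝ] (Fin n → ℝ) := EuclideanSpace.equiv (Fin n) ℝ with heLdef
  have hlip2 : LipschitzOnWith (‖(eL : E n →L[ℝ] (Fin n → ℝ))‖₊ * 2)
      (fun u => eL (f₀ u)) s := eL.lipschitz.comp_lipschitzOnWith hlip
  obtain ⟨g, hg, hgeq⟩ := hlip2.extend_pi
  set f : E n → E n := fun u => eL.symm (g u) with hfdef
  have hflip : LipschitzWith (‖(eL.symm : (Fin n → ℝ) →L[ℝ] E n)‖₊ *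
      (‖(eL : E n →L[ℝ] (Fin n → ℝ))‖₊ * 2)) f := eL.symm.lipschitz.comp hg
  have hfeq : ∀ u ∈ s, f u = f₀ u := by
    intro u hu
    rw [hfdef]
    simp only
    rw [← hgeq hu]
    simp
  -- the linear change of coordinates
  set NcL : E n →L[ℝ] E n := (Nc : E n →L[ℝ] E n) with hNcLdef
  set NcLinv : E n →L[ℝ] E n := (Nc.symm : E n →L[ℝ] E n) with hNcLinvdef
  set fstL := ContinuousLinearMap.fst ℝ (E n) (E n) with hfstdef
  set sndL := ContinuousLinearMap.snd ℝ (E n) (E n) with hsnddef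
  set Lfwd : (E n × E n) →L[ℝ] (E n × E n) :=
    (((1/2 : ℝ) • (fstL + sndL))).prod (NcLinv.comp ((1/2 : ℝ) • (sndL - fstL))) with hLfwddef
  set Lbwd : (E n × E n) →L[ℝ] (E n × E n) :=
    (fstL - NcL.comp sndL).prod (fstL + NcL.comp sndL) with hLbwddef
  have hleft : Function.LeftInverse Lbwd Lfwd := by
    rintro ⟨u, v⟩
    have h1 : Nc (Nc.symm ((1/2 : ℝ) • (v - u))) = (1/2 : ℝ) • (v - u) :=
      Nc.apply_symm_apply _
    refine Prod.ext ?_ ?_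
    · show (1/2 : ℝ) • (u + v) - Nc (Nc.symm ((1/2 : ℝ) • (v - u))) = u
      rw [h1]; module
    · show (1/2 : ℝ) • (u + v) + Nc (Nc.symm ((1/2 : ℝ) • (v - u))) = v
      rw [h1]; module
  have hright : Function.RightInverse Lbwd Lfwd := by
    rintro ⟨x, y⟩
    refine Prod.ext ?_ ?_
    · show (1/2 : ℝ) • ((x - Nc y) + (x + Nc y)) = x
      module
    · show Nc.symm ((1/2 : ℝ) • ((x + Nc y) - (x - Nc y))) = y
      have h2 : (1/2 : ℝ) • ((x + Nc y) - (x - Nc y)) = Nc y := by module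
      rw [h2, Nc.symm_apply_apply]
  set L : (E n × E n) ≃L[ℝ] (E n × E n) :=
    ContinuousLinearEquiv.equivOfInverse Lfwd Lbwd hleft hright with hLdef
  refine ⟨V, hVnhds, hVU, L, _, f, hflip, ?_⟩
  rintro p hp
  refine ⟨(p.1 - Nc p.2, p.1 + Nc p.2), ?_, ?_⟩
  · show p.1 + Nc p.2 = f (p.1 - Nc p.2)
    rw [hfeq _ ⟨p, hp, rfl⟩, hgraph p hp]
  · show Lfwd (p.1 - Nc p.2, p.1 + Nc p.2) = p
    have : (p.1 - Nc p.2, p.1 + Nc p.2) = Lbwd p := rfl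
    rw [this]
    exact hright p

end Main

/-- **Rectifiability of optimal transport (McCann–Pass–Warren).**  If `c ∈ C²(U)` near
`(x₀,y₀)` is non-degenerate there, `det D²_{xy} c(x₀,y₀) ≠ 0` (A2), and
`S ⊆ M⁺ × M⁻` is `c`-cyclically monotone, then there is a neighbourhood `V ⊆ U` of
`(x₀,y₀)` such that `S ∩ V` lies in an `n`-dimensional Lipschitz submanifold: in suitable
linear coordinates on `ℝⁿ × ℝⁿ`, it is contained in the graph of a Lipschitz map defined
on an `n`-dimensional coordinate plane. -/
theorem rectifiability_of_optimal_transport {n : ℕ}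
    (c : E n × E n → ℝ) (x₀ y₀ : E n) (U : Set (E n × E n))
    (hU : U ∈ nhds (x₀, y₀)) (hUopen : IsOpen U)
    (hc : ContDiffOn ℝ 2 c U)
    (hA2 : (mixedHessian c x₀ y₀).det ≠ 0)
    (S : Set (E n × E n)) (hS : CCyclicallyMonotone c S) :
    ∃ V ∈ nhds (x₀, y₀), V ⊆ U ∧
      ∃ (L : (E n × E n) ≃L[ℝ] (E n × E n)) (K : ℝ≥0) (f : E n → E n),
        LipschitzWith K f ∧ S ∩ V ⊆ L '' {p : E n × E n | p.2 = f p.1} := by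
  exact rectifiability_of_optimal_transport' c x₀ y₀ U hU hUopen hc hA2 S hS
end
end
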